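/- arXiv:0809.3626 — 3 statements merged into one kernel-verified Lean document; each statement's English description precedes it below -/
import Mathlib

section
/- Let Z be a Banach space with an FDD (E_i), and let V = (v_i) be a 1-unconditional normalized basic sequence with biorthogonal functionals V* = (v_i*). Then (E_i) satisfies subsequential V upper block estimates in Z if and only if (E_i*) satisfies subsequential V* lower block estimates in Z^(*). Moreover, if (E_i) is bimonotone in Z, then for any C >= 1, (E_i) satisfies subsequential C-V upper block estimates in Z if and only if (E_i*) satisfies subsequential C-V* lower block estimates in Z^(*). -/
open Filter Topology Set

noncomputable section

/-- A bundled (real) Banach space. -/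
structure BanachSp : Type 1 where
  carrier : Type
  [nacg : NormedAddCommGroup carrier]
  [nsp : NormedSpace ℝ carrier]
  [complete : CompleteSpace carrier]

attribute [instance] BanachSp.nacg BanachSp.nsp BanachSp.complete

instance : CoeSort BanachSp Type := ⟨BanachSp.carrier⟩

section Seqs

variable {V : Type*} [NormedAddCommGroup V] [NormedSpace ℝ V]
variable {W : Type*} [NormedAddCommGroup W] [NormedSpace ℝ W]
variable {X : Type*} [NormedAddCommGroup X] [NormedSpace ℝ X]

/-- `DomBy u x C` : the sequence `(u i)` `C`-dominates the sequence `(x i)`, i.e.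
`‖∑ a i • x i‖ ≤ C * ‖∑ a i • u i‖` for all finitely supported scalars. -/
def DomBy (u : ℕ → V) (x : ℕ → X) (C : ℝ) : Prop :=
  ∀ (a : ℕ → ℝ) (n : ℕ),
    ‖∑ i ∈ Finset.range n, a i • x i‖ ≤ C * ‖∑ i ∈ Finset.range n, a i • u i‖

def IsNormalized (v : ℕ → V) : Prop := ∀ i, ‖v i‖ = 1

/-- A basic sequence: nonzero vectors with uniformly bounded partial sum projections. -/
def IsBasicSeq (v : ℕ → V) : Prop :=
  (∀ i, v i ≠ 0) ∧ ∃ K : ℝ, 1 ≤ K ∧ ∀ (a : ℕ → ℝ) (m n : ℕ), m ≤ n →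
    ‖∑ i ∈ Finset.range m, a i • v i‖ ≤ K * ‖∑ i ∈ Finset.range n, a i • v i‖

/-- `1`-unconditionality : changing signs of coefficients does not change the norm. -/
def IsOneUnconditional (v : ℕ → V) : Prop :=
  ∀ (a ε : ℕ → ℝ), (∀ i, ε i = 1 ∨ ε i = -1) → ∀ n : ℕ,
    ‖∑ i ∈ Finset.range n, (ε i * a i) • v i‖ = ‖∑ i ∈ Finset.range n, a i • v i‖

/-- Bimonotonicity of a basic sequence: interval projections have norm at most one. -/
def IsBimonotoneSeq (v : ℕ → V) : Prop :=
  ∀ (a : ℕ → ℝ) (p q n : ℕ), q ≤ n →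
    ‖∑ i ∈ Finset.Ico p q, a i • v i‖ ≤ ‖∑ i ∈ Finset.range n, a i • v i‖

/-- `(v i)` is `D`-right-dominant : if `m i ≤ n i` for all `i` then `(v (m i))` is
`D`-dominated by `(v (n i))`. -/
def RightDominantC (v : ℕ → V) (D : ℝ) : Prop :=
  ∀ m n : ℕ → ℕ, StrictMono m → StrictMono n → (∀ i, m i ≤ n i) →
    DomBy (fun i => v (n i)) (fun i => v (m i)) D

def RightDominant (v : ℕ → V) : Prop := ∃ D : ℝ, 1 ≤ D ∧ RightDominantC v D

/-- `(v i)` is `D`-left-dominant : if `m i ≤ n i` for all `i` then `(v (m i))`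
`D`-dominates `(v (n i))`. -/
def LeftDominantC (v : ℕ → V) (D : ℝ) : Prop :=
  ∀ m n : ℕ → ℕ, StrictMono m → StrictMono n → (∀ i, m i ≤ n i) →
    DomBy (fun i => v (m i)) (fun i => v (n i)) D

/-- `C`-block-stability: any two normalized block bases whose blocks run along the same
successive intervals are `C`-equivalent. -/
def BlockStableC (v : ℕ → V) (C : ℝ) : Prop :=
  ∀ (x y : ℕ → V) (k : ℕ → ℕ), StrictMono k →
    (∀ i, x i ∈ Submodule.span ℝ (v '' Set.Ico (k i) (k (i+1)))) →
    (∀ i, y i ∈ Submodule.span ℝ (v '' Set.Ico (k i) (k (i+1)))) →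
    (∀ i, ‖x i‖ = 1) → (∀ i, ‖y i‖ = 1) → DomBy x y C

def BlockStable (v : ℕ → V) : Prop := ∃ C : ℝ, 1 ≤ C ∧ BlockStableC v C

/-- A basic sequence is shrinking if every functional is small on far tails of its span. -/
def ShrinkingSeq (v : ℕ → V) : Prop :=
  ∀ φ : V →L[ℝ] ℝ, ∀ δ : ℝ, 0 < δ → ∃ m : ℕ, ∀ (a : ℕ → ℝ) (n : ℕ),
    ‖∑ i ∈ Finset.Ico m n, a i • v i‖ ≤ 1 →
    |φ (∑ i ∈ Finset.Ico m n, a i • v i)| ≤ δ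

/-- A basic sequence is boundedly complete if series with bounded partial sums converge. -/
def BoundedlyCompleteSeq (v : ℕ → V) : Prop :=
  ∀ a : ℕ → ℝ, (∃ M : ℝ, ∀ n, ‖∑ i ∈ Finset.range n, a i • v i‖ ≤ M) →
    ∃ s : V, Tendsto (fun n => ∑ i ∈ Finset.range n, a i • v i) atTop (𝓝 s)

/-- `(w i)` represents (isometrically) the sequence of biorthogonal functionals of the
`1`-unconditional basic sequence `(v i)`: the norm of `∑ a i • w i` is the supremum of the
pairings `∑ a i * b i` over `b` with `‖∑ b i • v i‖ ≤ 1`. -/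
def IsBiorthDual (v : ℕ → V) (w : ℕ → W) : Prop :=
  ∀ (a : ℕ → ℝ) (n : ℕ),
    IsLUB {r : ℝ | ∃ b : ℕ → ℝ, ‖∑ i ∈ Finset.range n, b i • v i‖ ≤ 1 ∧
      r = ∑ i ∈ Finset.range n, a i * b i} ‖∑ i ∈ Finset.range n, a i • w i‖

def WeaklyNullSeq (x : ℕ → X) : Prop :=
  ∀ φ : X →L[ℝ] ℝ, Tendsto (fun i => φ (x i)) atTop (𝓝 0)

end Seqs

/-- A finite-dimensional decomposition (FDD) of `Z` : finite-dimensional subspaces `E i`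
together with the coordinate projections `P i`, such that every `z` is the sum of its
coordinates, uniquely. -/
structure FDD (Z : Type*) [NormedAddCommGroup Z] [NormedSpace ℝ Z] where
  E : ℕ → Submodule ℝ Z
  finDim : ∀ n, FiniteDimensional ℝ (E n)
  P : ℕ → Z →L[ℝ] Z
  mem_E : ∀ i z, P i z ∈ E i
  sum_eq : ∀ z : Z, Tendsto (fun n => ∑ i ∈ Finset.range n, P i z) atTop (𝓝 z)
  unique : ∀ (z : Z) (f : ℕ → Z), (∀ i, f i ∈ E i) →
    Tendsto (fun n => ∑ i ∈ Finset.range n, f i) atTop (𝓝 z) → ∀ i, f i = P i z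

namespace FDD

variable {Z : Type*} [NormedAddCommGroup Z] [NormedSpace ℝ Z]
variable {V : Type*} [NormedAddCommGroup V] [NormedSpace ℝ V]
variable {W : Type*} [NormedAddCommGroup W] [NormedSpace ℝ W]

/-- The canonical projection `P^E_s` onto the span of `(E i : i ∈ s)`. -/
def proj (F : FDD Z) (s : Finset ℕ) : Z →L[ℝ] Z := ∑ i ∈ s, F.P i

/-- The support of a vector with respect to the FDD. -/
def supp (F : FDD Z) (z : Z) : Set ℕ := {i | F.P i z ≠ 0}

/-- `min supp_E z`. -/
def minSupp (F : FDD Z) (z : Z) : ℕ := sInf (F.supp z)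

/-- A block sequence with respect to an FDD: supports lie in successive intervals. -/
def IsBlockSeq (F : FDD Z) (z : ℕ → Z) : Prop :=
  ∃ k : ℕ → ℕ, StrictMono k ∧ ∀ i, F.supp (z i) ⊆ Set.Ico (k i) (k (i+1))

/-- Bimonotonicity: all interval projections have norm at most `1`. -/
def Bimonotone (F : FDD Z) : Prop :=
  ∀ (m n : ℕ) (z : Z), ‖F.proj (Finset.Icc m n) z‖ ≤ ‖z‖

/-- `C` is the projection constant: the supremum of norms of interval projections. -/
def IsProjConst (F : FDD Z) (C : ℝ) : Prop :=
  IsLUB {r : ℝ | ∃ (m n : ℕ) (z : Z), ‖z‖ ≤ 1 ∧ r = ‖F.proj (Finset.Icc m n) z‖} C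

/-- The FDD is shrinking: every functional is the norm limit of its finite-dimensional
restrictions, i.e. the biorthogonal functionals form an FDD of the dual. -/
def Shrinking (F : FDD Z) : Prop :=
  ∀ φ : Z →L[ℝ] ℝ,
    Tendsto (fun n => ‖φ - φ.comp (F.proj (Finset.range n))‖) atTop (𝓝 0)

/-- The FDD is boundedly complete. -/
def BoundedlyComplete (F : FDD Z) : Prop :=
  ∀ f : ℕ → Z, (∀ i, f i ∈ F.E i) →
    (∃ M : ℝ, ∀ n, ‖∑ i ∈ Finset.range n, f i‖ ≤ M) →
    ∃ z : Z, Tendsto (fun n => ∑ i ∈ Finset.range n, f i) atTop (𝓝 z)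

/-- `H` is a blocking of `F`. -/
def IsBlockingOf (H F : FDD Z) : Prop :=
  ∃ m : ℕ → ℕ, m 0 = 0 ∧ StrictMono m ∧
    ∀ j, H.E j = ⨆ i ∈ Finset.Ico (m j) (m (j+1)), F.E i

/-- The closed span `Z_m` of the subspaces `E i`, `i ≥ m` (the first `m` coordinates
removed). -/
def tail (F : FDD Z) (m : ℕ) : Set Z :=
  closure (↑(⨆ i ∈ Set.Ici m, F.E i) : Set Z)

/-- Subsequential `C`-`V`-upper block estimates. -/
def UpperBlockC (F : FDD Z) (v : ℕ → V) (C : ℝ) : Prop :=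
  ∀ z : ℕ → Z, F.IsBlockSeq z → (∀ i, ‖z i‖ = 1) →
    DomBy (fun i => v (F.minSupp (z i))) z C

def UpperBlock (F : FDD Z) (v : ℕ → V) : Prop := ∃ C : ℝ, 1 ≤ C ∧ F.UpperBlockC v C

/-- Subsequential `C`-`V`-lower block estimates. -/
def LowerBlockC (F : FDD Z) (v : ℕ → V) (C : ℝ) : Prop :=
  ∀ z : ℕ → Z, F.IsBlockSeq z → (∀ i, ‖z i‖ = 1) →
    DomBy z (fun i => v (F.minSupp (z i))) C

def LowerBlock (F : FDD Z) (v : ℕ → V) : Prop := ∃ C : ℝ, 1 ≤ C ∧ F.LowerBlockC v C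

/-- A functional supported (w.r.t. the biorthogonal FDD `(E i ^*)`) on the finite set `s`. -/
def dualSupported (F : FDD Z) (s : Finset ℕ) (φ : Z →L[ℝ] ℝ) : Prop :=
  ∀ z : Z, φ z = φ (F.proj s z)

/-- A block sequence of the biorthogonal functionals `(E i ^*)`. -/
def IsDualBlockSeq (F : FDD Z) (φ : ℕ → Z →L[ℝ] ℝ) : Prop :=
  ∃ k : ℕ → ℕ, StrictMono k ∧
    ∀ i, F.dualSupported (Finset.Ico (k i) (k (i+1))) (φ i)

/-- `min supp` of a functional w.r.t. `(E i ^*)`. -/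
def dualMinSupp (F : FDD Z) (φ : Z →L[ℝ] ℝ) : ℕ :=
  sInf {j | ∃ z, φ (F.P j z) ≠ 0}

/-- The biorthogonal FDD `(E i ^*)` satisfies subsequential `C`-`V^*`-lower block
estimates in `Z^(*)`. -/
def DualLowerBlockC (F : FDD Z) (w : ℕ → W) (C : ℝ) : Prop :=
  ∀ φ : ℕ → Z →L[ℝ] ℝ, F.IsDualBlockSeq φ → (∀ i, ‖φ i‖ = 1) →
    DomBy φ (fun i => w (F.dualMinSupp (φ i))) C

def DualLowerBlock (F : FDD Z) (w : ℕ → W) : Prop := ∃ C : ℝ, 1 ≤ C ∧ F.DualLowerBlockC w C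

/-- The biorthogonal FDD `(E i ^*)` satisfies subsequential `C`-`V`-upper block
estimates. -/
def DualUpperBlockC (F : FDD Z) (w : ℕ → W) (C : ℝ) : Prop :=
  ∀ φ : ℕ → Z →L[ℝ] ℝ, F.IsDualBlockSeq φ → (∀ i, ‖φ i‖ = 1) →
    DomBy (fun i => w (F.dualMinSupp (φ i))) φ C

/-- A `δ̄`-skipped block sequence w.r.t. the FDD. -/
def IsSkippedBlock (F : FDD Z) (δ : ℕ → ℝ) (y : ℕ → Z) : Prop :=
  (∀ i, ‖y i‖ = 1) ∧ ∃ k : ℕ → ℕ, k 0 = 0 ∧ StrictMono k ∧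
    ∀ i, ‖F.proj (Finset.Ioo (k i) (k (i+1))) (y i) - y i‖ < δ i

end FDD

section Trees

variable {V : Type*} [NormedAddCommGroup V] [NormedSpace ℝ V]
variable {W : Type*} [NormedAddCommGroup W] [NormedSpace ℝ W]

/-- The finite set `{n 0, …, n (2l+1)}`, i.e. the branch node of level `l+1` along the
strictly increasing sequence `n`. -/
def branchSet (n : ℕ → ℕ) (l : ℕ) : Finset ℕ := Finset.image n (Finset.range (2*l+2))

/-- A normalized weakly null even tree in `X` (indexed by finite sets of naturals, which
correspond to finite strictly increasing sequences). -/
def WNEvenTree {X : Type*} [NormedAddCommGroup X] [NormedSpace ℝ X]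
    (x : Finset ℕ → X) : Prop :=
  (∀ s : Finset ℕ, Even s.card → ‖x s‖ = 1) ∧
  ∀ s : Finset ℕ, Odd s.card →
    ∀ φ : X →L[ℝ] ℝ, Tendsto (fun k => φ (x (insert k s))) atTop (𝓝 0)

/-- Subsequential `C`-`V`-upper tree estimates. -/
def UpperTreeC (v : ℕ → V) (X : Type*) [NormedAddCommGroup X] [NormedSpace ℝ X]
    (C : ℝ) : Prop :=
  ∀ x : Finset ℕ → X, WNEvenTree x →
    ∃ n : ℕ → ℕ, StrictMono n ∧
      DomBy (fun l => v (n (2*l))) (fun l => x (branchSet n l)) C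

/-- Subsequential `V`-upper tree estimates. -/
def UpperTree (v : ℕ → V) (X : Type*) [NormedAddCommGroup X] [NormedSpace ℝ X] : Prop :=
  ∃ C : ℝ, 1 ≤ C ∧ UpperTreeC v X C

/-- A normalized `w^*`-null even tree in the dual of `X`. -/
def WStarNullEvenTree {X : Type*} [NormedAddCommGroup X] [NormedSpace ℝ X]
    (f : Finset ℕ → (X →L[ℝ] ℝ)) : Prop :=
  (∀ s : Finset ℕ, Even s.card → ‖f s‖ = 1) ∧
  ∀ s : Finset ℕ, Odd s.card →
    ∀ u : X, Tendsto (fun k => f (insert k s) u) atTop (𝓝 0)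

/-- Subsequential `C`-`V^*`-lower `w^*` tree estimates for the dual of `X`. -/
def LowerWStarTreeC (w : ℕ → W) (X : Type*) [NormedAddCommGroup X] [NormedSpace ℝ X]
    (C : ℝ) : Prop :=
  ∀ f : Finset ℕ → (X →L[ℝ] ℝ), WStarNullEvenTree f →
    ∃ n : ℕ → ℕ, StrictMono n ∧
      DomBy (fun l => f (branchSet n l)) (fun l => w (n (2*l))) C

end Trees

section Maps

variable {X : Type*} [NormedAddCommGroup X] [NormedSpace ℝ X]
variable {Y : Type*} [NormedAddCommGroup Y] [NormedSpace ℝ Y]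

/-- `X` embeds isomorphically into `Y`. -/
def Embeds (X Y : Type*) [NormedAddCommGroup X] [NormedSpace ℝ X]
    [NormedAddCommGroup Y] [NormedSpace ℝ Y] : Prop :=
  ∃ T : X →L[ℝ] Y, ∃ c : ℝ, 0 < c ∧ ∀ x : X, c * ‖x‖ ≤ ‖T x‖

/-- `X` is a quotient of `Z` (there is a bounded linear surjection `Z → X`). -/
def IsQuotientOf (X Z : Type*) [NormedAddCommGroup X] [NormedSpace ℝ X]
    [NormedAddCommGroup Z] [NormedSpace ℝ Z] : Prop :=
  ∃ Q : Z →L[ℝ] X, Function.Surjective Q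

/-- A map between dual spaces is `w^*`-`w^*` continuous. -/
def WStarWStarContinuous {X Z : Type*} [NormedAddCommGroup X] [NormedSpace ℝ X]
    [NormedAddCommGroup Z] [NormedSpace ℝ Z]
    (T : StrongDual ℝ X →L[ℝ] StrongDual ℝ Z) : Prop :=
  Continuous (fun φ : WeakDual ℝ X =>
    StrongDual.toWeakDual (T (WeakDual.toStrongDual φ)))

end Maps


/-! ### Auxiliary lemmas for the proof -/

section Aux

variable {Z : Type*} [NormedAddCommGroup Z] [NormedSpace ℝ Z]
variable {V : Type*} [NormedAddCommGroup V] [NormedSpace ℝ V]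
variable {W : Type*} [NormedAddCommGroup W] [NormedSpace ℝ W]

namespace FDD

variable (F : FDD Z)

lemma proj_apply (s : Finset ℕ) (z : Z) : F.proj s z = ∑ i ∈ s, F.P i z := by
  simp [FDD.proj]

lemma P_P (i j : ℕ) (z : Z) : F.P j (F.P i z) = if j = i then F.P i z else 0 := by
  have hmem : ∀ l, (if l = i then F.P i z else 0) ∈ F.E l := by
    intro l
    by_cases h : l = i
    · simp [h, F.mem_E]
    · simp [h]
  have htend : Tendsto (fun n => ∑ l ∈ Finset.range n, (if l = i then F.P i z else 0))
      atTop (𝓝 (F.P i z)) := by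
    apply tendsto_atTop_of_eventually_const (i₀ := i + 1)
    intro n hn
    rw [Finset.sum_ite_eq' (Finset.range n) i (fun _ => F.P i z)]
    simp [Finset.mem_range]; omega
  exact (F.unique (F.P i z) _ hmem htend j).symm

lemma P_proj (s : Finset ℕ) (j : ℕ) (z : Z) :
    F.P j (F.proj s z) = if j ∈ s then F.P j z else 0 := by
  rw [proj_apply, map_sum]
  have : ∀ i ∈ s, F.P j (F.P i z) = if i = j then F.P j z else 0 := by
    intro i _
    rw [F.P_P]
    by_cases h : j = i
    · subst h; simp
    · rw [if_neg h, if_neg (fun h' => h h'.symm)]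
  rw [Finset.sum_congr rfl this, Finset.sum_ite_eq' s j (fun _ => F.P j z)]

lemma proj_P (s : Finset ℕ) (i : ℕ) (z : Z) :
    F.proj s (F.P i z) = if i ∈ s then F.P i z else 0 := by
  rw [proj_apply]
  have : ∀ j ∈ s, F.P j (F.P i z) = if j = i then F.P i z else 0 := fun j _ => F.P_P i j z
  rw [Finset.sum_congr rfl this, Finset.sum_ite_eq' s i (fun _ => F.P i z)]

lemma proj_proj (s t : Finset ℕ) (z : Z) :
    F.proj s (F.proj t z) = F.proj (s ∩ t) z := by
  rw [proj_apply (s := s), proj_apply (s := s ∩ t)]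
  have : ∀ j ∈ s, F.P j (F.proj t z) = if j ∈ t then F.P j z else 0 := fun j _ => F.P_proj t j z
  rw [Finset.sum_congr rfl this, Finset.sum_ite_mem s t (fun j => F.P j z)]

lemma proj_eq_self (z : Z) (s : Finset ℕ) (h : F.supp z ⊆ ↑s) : F.proj s z = z := by
  obtain ⟨N, hN⟩ := s.exists_nat_subset_range
  have hconst : ∀ n, N ≤ n → ∑ i ∈ Finset.range n, F.P i z = F.proj s z := by
    intro n hn
    rw [proj_apply]
    refine (Finset.sum_subset (hN.trans (Finset.range_subset_range.2 hn)) ?_).symm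
    intro j _ hj
    by_contra hne
    exact hj (h hne)
  have h1 : Tendsto (fun n => ∑ i ∈ Finset.range n, F.P i z) atTop (𝓝 (F.proj s z)) :=
    tendsto_atTop_of_eventually_const hconst
  exact tendsto_nhds_unique h1 (F.sum_eq z)

lemma proj_eq_zero (z : Z) (s : Finset ℕ) (h : ∀ j ∈ s, F.P j z = 0) : F.proj s z = 0 := by
  rw [proj_apply]; exact Finset.sum_eq_zero h

lemma supp_proj_subset (z : Z) (s : Finset ℕ) : F.supp (F.proj s z) ⊆ ↑s ∩ F.supp z := by
  intro j hj
  have := F.P_proj s j z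
  by_cases hjs : j ∈ s
  · refine ⟨hjs, ?_⟩
    simp only [FDD.supp, Set.mem_setOf_eq] at hj ⊢
    rwa [this, if_pos hjs] at hj
  · exfalso; simp only [FDD.supp, Set.mem_setOf_eq] at hj
    rw [this, if_neg hjs] at hj; exact hj rfl

lemma eq_zero_of_supp_empty (z : Z) (h : ∀ j, F.P j z = 0) : z = 0 := by
  have := F.sum_eq z
  simp only [h, Finset.sum_const_zero] at this
  exact tendsto_nhds_unique this tendsto_const_nhds

lemma supp_nonempty (z : Z) (hz : z ≠ 0) : (F.supp z).Nonempty := by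
  by_contra h
  rw [Set.not_nonempty_iff_eq_empty] at h
  refine hz (F.eq_zero_of_supp_empty z fun j => ?_)
  by_contra hj
  have : j ∈ F.supp z := hj
  rw [h] at this
  exact this

lemma supp_smul (z : Z) (c : ℝ) (hc : c ≠ 0) : F.supp (c • z) = F.supp z := by
  ext j
  simp [FDD.supp, map_smul, smul_eq_zero, hc]

lemma minSupp_eq (z : Z) (m : ℕ) (hm : F.P m z ≠ 0) (hlow : F.supp z ⊆ Set.Ici m) :
    F.minSupp z = m := by
  refine le_antisymm (Nat.sInf_le hm) (le_csInf ⟨m, hm⟩ fun j hj => hlow hj)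

end FDD


section Uncond

variable {V : Type*} [NormedAddCommGroup V] [NormedSpace ℝ V]

/-- 1-unconditionality implies coefficient-wise monotonicity of norms. -/
lemma uncond_mono {v : ℕ → V} (hv : IsOneUnconditional v) (a b : ℕ → ℝ) (n : ℕ)
    (h : ∀ i < n, |a i| ≤ |b i|) :
    ‖∑ i ∈ Finset.range n, a i • v i‖ ≤ ‖∑ i ∈ Finset.range n, b i • v i‖ := by
  -- mix j : coefficients a below j, b from j on
  set mix : ℕ → ℕ → ℝ := fun j i => if i < j then a i else b i with hmix
  have key : ∀ j, ‖∑ i ∈ Finset.range n, mix j i • v i‖ ≤ ‖∑ i ∈ Finset.range n, b i • v i‖ := by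
    intro j
    induction j with
    | zero => simp [hmix]
    | succ j ih =>
      by_cases hjn : j < n
      · -- change coefficient j from b j to a j
        by_cases hbj : b j = 0
        · have haj : a j = 0 := by
            have := h j hjn; rw [hbj] at this; simp at this
            exact abs_eq_zero.mp (le_antisymm (by simpa [hbj] using h j hjn) (abs_nonneg _))
          have : ∀ i ∈ Finset.range n, mix (j+1) i • v i = mix j i • v i := by
            intro i _
            by_cases hij : i = j
            · subst hij; simp [hmix, haj, hbj]
            · have : (i < j + 1) = (i < j) := by
                by_cases h1 : i < j
                · simp [h1, Nat.lt_succ_of_lt h1]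
                · have : ¬ i < j + 1 := by omega
                  simp [h1, this]
              simp only [hmix, this]
          rw [Finset.sum_congr rfl this]; exact ih
        · set t : ℝ := a j / b j with ht
          have htle : |t| ≤ 1 := by
            rw [ht, abs_div]
            rw [div_le_one (abs_pos.2 hbj)]
            exact h j hjn
          set lam : ℝ := (1 + t) / 2 with hlam
          have hlam0 : 0 ≤ lam := by
            have := neg_abs_le t; rw [hlam]; nlinarith [htle]
          have hlam1 : lam ≤ 1 := by
            have := le_abs_self t; rw [hlam]; nlinarith [htle]
          set eps : ℕ → ℝ := fun i => if i = j then -1 else 1 with heps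
          have hepspm : ∀ i, eps i = 1 ∨ eps i = -1 := by
            intro i; by_cases hi : i = j <;> simp [heps, hi]
          have hid : ∑ i ∈ Finset.range n, mix (j+1) i • v i =
              lam • (∑ i ∈ Finset.range n, mix j i • v i) +
              (1 - lam) • (∑ i ∈ Finset.range n, (eps i * mix j i) • v i) := by
            rw [Finset.smul_sum, Finset.smul_sum, ← Finset.sum_add_distrib]
            refine Finset.sum_congr rfl fun i _ => ?_
            rw [smul_smul, smul_smul, ← add_smul]
            congr 1
            by_cases hij : i = j
            · rw [hij]
              have h1 : mix (j+1) j = a j := by simp [hmix]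
              have h2 : mix j j = b j := by simp [hmix]
              have h3 : eps j = -1 := by simp [heps]
              rw [h1, h2, h3, hlam, ht]
              field_simp
              ring
            · have h3 : eps i = 1 := by simp [heps, hij]
              have h12 : mix (j+1) i = mix j i := by
                have : (i < j + 1) = (i < j) := by
                  by_cases h1 : i < j
                  · simp [h1, Nat.lt_succ_of_lt h1]
                  · have h2 : ¬ i < j + 1 := by omega
                    simp [h1, h2]
                simp only [hmix, this]
              rw [h3, h12]; ring
          calc ‖∑ i ∈ Finset.range n, mix (j+1) i • v i‖
              ≤ lam * ‖∑ i ∈ Finset.range n, mix j i • v i‖ +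
                (1 - lam) * ‖∑ i ∈ Finset.range n, (eps i * mix j i) • v i‖ := by
                rw [hid]
                refine (norm_add_le _ _).trans ?_
                rw [norm_smul, norm_smul, Real.norm_eq_abs, Real.norm_eq_abs,
                  abs_of_nonneg hlam0, abs_of_nonneg (by linarith)]
            _ = lam * ‖∑ i ∈ Finset.range n, mix j i • v i‖ +
                (1 - lam) * ‖∑ i ∈ Finset.range n, mix j i • v i‖ := by
                rw [hv (mix j) eps hepspm n]
            _ = ‖∑ i ∈ Finset.range n, mix j i • v i‖ := by ring
            _ ≤ _ := ih
      · -- j ≥ n : mix (j+1) = mix j on range n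
        have : ∀ i ∈ Finset.range n, mix (j+1) i • v i = mix j i • v i := by
          intro i hi
          rw [Finset.mem_range] at hi
          have h1 : i < j + 1 := by omega
          have h2 : i < j := by omega
          simp only [hmix, if_pos h1, if_pos h2]
        rw [Finset.sum_congr rfl this]; exact ih
  have : ∀ i ∈ Finset.range n, a i • v i = mix n i • v i := by
    intro i hi
    rw [Finset.mem_range] at hi
    simp only [hmix, if_pos hi]
  rw [Finset.sum_congr rfl this]
  exact key n

lemma uncond_abs {v : ℕ → V} (hv : IsOneUnconditional v) (a : ℕ → ℝ) (n : ℕ) :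
    ‖∑ i ∈ Finset.range n, |a i| • v i‖ = ‖∑ i ∈ Finset.range n, a i • v i‖ := by
  set eps : ℕ → ℝ := fun i => if a i < 0 then -1 else 1 with heps
  have hepspm : ∀ i, eps i = 1 ∨ eps i = -1 := by
    intro i; by_cases hi : a i < 0 <;> simp [heps, hi]
  have : ∀ i ∈ Finset.range n, |a i| • v i = (eps i * a i) • v i := by
    intro i _
    congr 1
    by_cases hi : a i < 0
    · simp [heps, hi, abs_of_neg hi]
    · simp [heps, hi, abs_of_nonneg (not_lt.1 hi)]
  rw [Finset.sum_congr rfl this, hv a eps hepspm n]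

end Uncond

section Biorth

variable {V : Type*} [NormedAddCommGroup V] [NormedSpace ℝ V]
variable {W : Type*} [NormedAddCommGroup W] [NormedSpace ℝ W]

lemma coeffs_eq_zero {v : ℕ → V} (hvbasic : IsBasicSeq v) (b : ℕ → ℝ) (N : ℕ)
    (h : ‖∑ j ∈ Finset.range N, b j • v j‖ = 0) : ∀ j < N, b j = 0 := by
  obtain ⟨hne, K, hK1, hK⟩ := hvbasic
  have hzero : ∀ m ≤ N, ‖∑ j ∈ Finset.range m, b j • v j‖ = 0 := by
    intro m hm
    refine le_antisymm ?_ (norm_nonneg _)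
    calc ‖∑ j ∈ Finset.range m, b j • v j‖ ≤ K * ‖∑ j ∈ Finset.range N, b j • v j‖ :=
          hK b m N hm
      _ = 0 := by rw [h, mul_zero]
  intro j hj
  have h1 : ∑ i ∈ Finset.range (j+1), b i • v i = 0 := norm_eq_zero.mp (hzero (j+1) hj)
  have h2 : ∑ i ∈ Finset.range j, b i • v i = 0 := norm_eq_zero.mp (hzero j (le_of_lt hj))
  have : b j • v j = 0 := by
    have := Finset.sum_range_succ (fun i => b i • v i) j
    rw [h1, h2] at this
    simpa using this.symm
  rcases smul_eq_zero.mp this with h | h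
  · exact h
  · exact absurd h (hne j)

lemma biorth_pairing {v : ℕ → V} {w : ℕ → W} (hvbasic : IsBasicSeq v)
    (hw : IsBiorthDual v w) (a b : ℕ → ℝ) (N : ℕ) :
    ∑ j ∈ Finset.range N, a j * b j ≤
      ‖∑ j ∈ Finset.range N, b j • v j‖ * ‖∑ j ∈ Finset.range N, a j • w j‖ := by
  set r : ℝ := ‖∑ j ∈ Finset.range N, b j • v j‖ with hr
  rcases eq_or_lt_of_le (norm_nonneg (∑ j ∈ Finset.range N, b j • v j)) with h0 | hpos
  · have hb0 : ∀ j < N, b j = 0 := coeffs_eq_zero hvbasic b N h0.symm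
    have : ∑ j ∈ Finset.range N, a j * b j = 0 := by
      refine Finset.sum_eq_zero fun j hj => ?_
      rw [hb0 j (Finset.mem_range.1 hj), mul_zero]
    rw [this]
    exact mul_nonneg (norm_nonneg _) (norm_nonneg _)
  · have hfeas : ‖∑ j ∈ Finset.range N, (r⁻¹ * b j) • v j‖ ≤ 1 := by
      have : ∑ j ∈ Finset.range N, (r⁻¹ * b j) • v j =
          r⁻¹ • ∑ j ∈ Finset.range N, b j • v j := by
        rw [Finset.smul_sum]
        exact Finset.sum_congr rfl fun j _ => by rw [smul_smul]
      rw [this, norm_smul, Real.norm_eq_abs, abs_of_nonneg (inv_nonneg.2 (le_of_lt hpos)),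
        ← hr, inv_mul_cancel₀ (ne_of_gt hpos)]
    have hmem : ∑ j ∈ Finset.range N, a j * (r⁻¹ * b j) ∈
        {x : ℝ | ∃ c : ℕ → ℝ, ‖∑ i ∈ Finset.range N, c i • v i‖ ≤ 1 ∧
          x = ∑ i ∈ Finset.range N, a i * c i} :=
      ⟨fun j => r⁻¹ * b j, hfeas, rfl⟩
    have hle := (hw a N).1 hmem
    have : ∑ j ∈ Finset.range N, a j * (r⁻¹ * b j) =
        r⁻¹ * ∑ j ∈ Finset.range N, a j * b j := by
      rw [Finset.mul_sum]; exact Finset.sum_congr rfl fun j _ => by ring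
    rw [this] at hle
    calc ∑ j ∈ Finset.range N, a j * b j
        = r * (r⁻¹ * ∑ j ∈ Finset.range N, a j * b j) := by
          rw [← mul_assoc, mul_inv_cancel₀ (ne_of_gt hpos), one_mul]
      _ ≤ r * ‖∑ j ∈ Finset.range N, a j • w j‖ :=
          mul_le_mul_of_nonneg_left hle (le_of_lt hpos)

end Biorth

section Ext

/-- Extension of coefficients along a strictly increasing index map. -/
def coefExt (m : ℕ → ℕ) (c : ℕ → ℝ) (n : ℕ) : ℕ → ℝ :=
  fun j => ∑ i ∈ Finset.range n, if m i = j then c i else 0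

lemma coefExt_apply {m : ℕ → ℕ} (hm : ∀ i i', i < n → i' < n → m i = m i' → i = i')
    (c : ℕ → ℝ) {i : ℕ} (hi : i < n) : coefExt m c n (m i) = c i := by
  simp only [coefExt]
  rw [Finset.sum_eq_single_of_mem i (Finset.mem_range.2 hi)]
  · rw [if_pos rfl]
  · intro i' hi' hne
    rw [if_neg]
    intro h
    exact hne (hm i' i (Finset.mem_range.1 hi') hi h)

lemma coefExt_apply_zero {m : ℕ → ℕ} (c : ℕ → ℝ) {j : ℕ} (hj : ∀ i < n, m i ≠ j) :
    coefExt m c n j = 0 := by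
  simp only [coefExt]
  exact Finset.sum_eq_zero fun i hi => if_neg (hj i (Finset.mem_range.1 hi))

lemma sum_coefExt {M : Type*} [AddCommMonoid M] [Module ℝ M]
    (m : ℕ → ℕ) (c : ℕ → ℝ) (n N : ℕ) (g : ℕ → M) (hN : ∀ i < n, m i < N) :
    ∑ j ∈ Finset.range N, coefExt m c n j • g j = ∑ i ∈ Finset.range n, c i • g (m i) := by
  simp only [coefExt, Finset.sum_smul]
  rw [Finset.sum_comm]
  refine Finset.sum_congr rfl fun i hi => ?_
  have : ∀ j ∈ Finset.range N, (if m i = j then c i else 0) • g j =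
      if m i = j then c i • g j else 0 := by
    intro j _
    by_cases h : m i = j <;> simp [h]
  rw [Finset.sum_congr rfl this, Finset.sum_ite_eq (Finset.range N) (m i) (fun j => c i • g j),
    if_pos (Finset.mem_range.2 (hN i (Finset.mem_range.1 hi)))]

lemma coefExt_abs (m : ℕ → ℕ) (c : ℕ → ℝ) (n j : ℕ)
    (hm : ∀ i i', i < n → i' < n → m i = m i' → i = i') :
    coefExt m (fun i => |c i|) n j = |coefExt m c n j| := by
  by_cases h : ∃ i < n, m i = j
  · obtain ⟨i, hi, rfl⟩ := h
    rw [coefExt_apply hm _ hi, coefExt_apply hm _ hi]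
  · push_neg at h
    rw [coefExt_apply_zero _ h, coefExt_apply_zero _ h, abs_zero]

end Ext

section Norming

variable {Z : Type*} [NormedAddCommGroup Z] [NormedSpace ℝ Z]

lemma exists_near_norming (φ : Z →L[ℝ] ℝ) (hφ : ‖φ‖ = 1) {ε : ℝ} (hε0 : 0 < ε) (hε1 : ε < 1) :
    ∃ y : Z, ‖y‖ ≤ 1 ∧ 1 - ε < φ y := by
  by_contra h
  push_neg at h
  have hbound : ∀ y : Z, |φ y| ≤ (1 - ε) * ‖y‖ := by
    intro y
    rcases eq_or_ne y 0 with rfl | hy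
    · simp
    · have hny : 0 < ‖y‖ := norm_pos_iff.2 hy
      set u : Z := ‖y‖⁻¹ • y with hu
      have hnu : ‖u‖ ≤ 1 := by
        rw [hu, norm_smul, Real.norm_eq_abs, abs_of_nonneg (inv_nonneg.2 hny.le),
          inv_mul_cancel₀ (ne_of_gt hny)]
      have h1 : φ u ≤ 1 - ε := h u hnu
      have h2 : φ (-u) ≤ 1 - ε := h (-u) (by rwa [norm_neg])
      rw [map_neg] at h2
      have habs : |φ u| ≤ 1 - ε := abs_le.2 ⟨by linarith, h1⟩
      have : φ y = ‖y‖ * φ u := by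
        rw [hu, map_smul, smul_eq_mul, ← mul_assoc, mul_inv_cancel₀ (ne_of_gt hny), one_mul]
      rw [this, abs_mul, abs_of_nonneg hny.le, mul_comm]
      exact mul_le_mul_of_nonneg_right habs hny.le
  have : ‖φ‖ ≤ 1 - ε := φ.opNorm_le_bound (by linarith) hbound
  rw [hφ] at this
  linarith

end Norming

section Limits

lemma eps_seq_tendsto : Tendsto (fun k : ℕ => ((k : ℝ) + 3)⁻¹) atTop (𝓝 0) := by
  have h1 : Tendsto (fun k : ℕ => (k : ℝ) + 3) atTop atTop :=
    tendsto_atTop_add_const_right _ 3 tendsto_natCast_atTop_atTop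
  exact h1.inv_tendsto_atTop

lemma eps_seq_pos (k : ℕ) : (0 : ℝ) < ((k : ℝ) + 3)⁻¹ := by positivity

lemma eps_seq_lt (k : ℕ) : ((k : ℝ) + 3)⁻¹ < 1/2 := by
  rw [inv_lt_iff_one_lt_mul₀ (by positivity)]
  have : (1:ℝ) ≤ (k:ℝ) + 3 - 1 := by
    have : (0:ℝ) ≤ (k:ℝ) := Nat.cast_nonneg k
    linarith
  nlinarith [Nat.cast_nonneg (α := ℝ) k]

/-- Limit lemma for direction 1. -/
lemma le_of_eps_bound₁ (x y C B : ℝ) (hy : 0 ≤ y)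
    (h : ∀ ε : ℝ, 0 < ε → ε < 1/2 → x ≤ C * ((B + ε) / (1 - 2*ε)) * y) :
    x ≤ C * B * y := by
  have htend : Tendsto (fun k : ℕ => C * ((B + ((k:ℝ)+3)⁻¹) / (1 - 2*((k:ℝ)+3)⁻¹)) * y)
      atTop (𝓝 (C * B * y)) := by
    have h1 : Tendsto (fun k : ℕ => (B + ((k:ℝ)+3)⁻¹) / (1 - 2*((k:ℝ)+3)⁻¹)) atTop
        (𝓝 ((B + 0) / (1 - 2*0))) := by
      exact (tendsto_const_nhds.add eps_seq_tendsto).div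
        (tendsto_const_nhds.sub (eps_seq_tendsto.const_mul 2)) (by norm_num)
    have := (h1.const_mul C).mul_const y
    simpa using this
  exact ge_of_tendsto' htend fun k => h _ (eps_seq_pos k) (eps_seq_lt k)

/-- Limit lemma for direction 2. -/
lemma le_of_eps_bound₂ (x y C B D : ℝ)
    (h : ∀ ε : ℝ, 0 < ε → ε < 1/2 → x ≤ C * B * (1 + ε) * y + ε * D) :
    x ≤ C * B * y := by
  have htend : Tendsto (fun k : ℕ => C * B * (1 + ((k:ℝ)+3)⁻¹) * y + ((k:ℝ)+3)⁻¹ * D)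
      atTop (𝓝 (C * B * y)) := by
    have h1 : Tendsto (fun k : ℕ => C * B * (1 + ((k:ℝ)+3)⁻¹) * y + ((k:ℝ)+3)⁻¹ * D)
        atTop (𝓝 (C * B * (1 + 0) * y + 0 * D)) := by
      exact (((tendsto_const_nhds.add eps_seq_tendsto).const_mul (C*B)).mul_const y).add
        (eps_seq_tendsto.mul_const D)
    simpa using h1
  exact ge_of_tendsto' htend fun k => h _ (eps_seq_pos k) (eps_seq_lt k)

end Limits

section ProjBound

variable {Z : Type*} [NormedAddCommGroup Z] [NormedSpace ℝ Z] [CompleteSpace Z]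

/-- Uniform bound on interval projections, via Banach–Steinhaus. -/
lemma FDD.exists_proj_bound (F : FDD Z) :
    ∃ B : ℝ, 1 ≤ B ∧ ∀ (m n : ℕ) (z : Z), ‖F.proj (Finset.Icc m n) z‖ ≤ B * ‖z‖ := by
  have hpt : ∀ z : Z, ∃ M : ℝ, ∀ n : ℕ, ‖F.proj (Finset.range n) z‖ ≤ M := by
    intro z
    have htend : Tendsto (fun n => ‖F.proj (Finset.range n) z‖) atTop (𝓝 ‖z‖) := by
      simp only [F.proj_apply]
      exact (F.sum_eq z).norm
    obtain ⟨M, hM⟩ := htend.bddAbove_range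
    exact ⟨M, fun n => hM (Set.mem_range_self n)⟩
  obtain ⟨K, hK⟩ := banach_steinhaus hpt
  refine ⟨max (2 * K) 1, le_max_right _ _, fun m n z => ?_⟩
  by_cases hmn : m ≤ n
  · have heq : F.proj (Finset.Icc m n) z =
        F.proj (Finset.range (n+1)) z - F.proj (Finset.range m) z := by
      rw [F.proj_apply, F.proj_apply, F.proj_apply, ← Finset.Ico_add_one_right_eq_Icc]
      exact Finset.sum_Ico_eq_sub _ (by omega)
    rw [heq]
    have h1 : ‖F.proj (Finset.range (n+1)) z‖ ≤ K * ‖z‖ :=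
      (F.proj (Finset.range (n+1))).le_of_opNorm_le (hK (n+1)) z
    have h2 : ‖F.proj (Finset.range m) z‖ ≤ K * ‖z‖ :=
      (F.proj (Finset.range m)).le_of_opNorm_le (hK m) z
    calc ‖F.proj (Finset.range (n+1)) z - F.proj (Finset.range m) z‖
        ≤ K * ‖z‖ + K * ‖z‖ := (norm_sub_le _ _).trans (add_le_add h1 h2)
      _ = 2 * K * ‖z‖ := by ring
      _ ≤ max (2 * K) 1 * ‖z‖ :=
          mul_le_mul_of_nonneg_right (le_max_left _ _) (norm_nonneg z)
  · rw [Finset.Icc_eq_empty (by omega)]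
    have : F.proj (∅ : Finset ℕ) z = 0 := by rw [F.proj_apply]; simp
    rw [this, norm_zero]
    positivity

end ProjBound


section DualSupp

variable {Z : Type*} [NormedAddCommGroup Z] [NormedSpace ℝ Z]

namespace FDD

variable (F : FDD Z)

lemma dualSupported_P_eq_zero {s : Finset ℕ} {φ : Z →L[ℝ] ℝ} (h : F.dualSupported s φ)
    {j : ℕ} (hj : j ∉ s) (z : Z) : φ (F.P j z) = 0 := by
  rw [h (F.P j z), F.proj_P, if_neg hj, map_zero]

lemma dualSupported_apply_eq_sum {s : Finset ℕ} {φ : Z →L[ℝ] ℝ} (h : F.dualSupported s φ)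
    (z : Z) : φ z = ∑ j ∈ s, φ (F.P j z) := by
  rw [h z, F.proj_apply, map_sum]

/-- The support set of a functional. -/
lemma dualMinSupp_def (φ : Z →L[ℝ] ℝ) :
    F.dualMinSupp φ = sInf {j | ∃ z, φ (F.P j z) ≠ 0} := rfl

lemma dualSupp_nonempty {s : Finset ℕ} {φ : Z →L[ℝ] ℝ} (h : F.dualSupported s φ)
    (hφ : φ ≠ 0) : {j | ∃ z, φ (F.P j z) ≠ 0}.Nonempty := by
  by_contra hc
  rw [Set.not_nonempty_iff_eq_empty] at hc
  refine hφ (ContinuousLinearMap.ext fun z => ?_)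
  have hall : ∀ j, ∀ y : Z, φ (F.P j y) = 0 := by
    intro j y
    by_contra hne
    have : j ∈ {j | ∃ z, φ (F.P j z) ≠ 0} := ⟨y, hne⟩
    rw [hc] at this
    exact this
  rw [F.dualSupported_apply_eq_sum h z]
  simp [hall]

lemma dualSupp_subset {s : Finset ℕ} {φ : Z →L[ℝ] ℝ} (h : F.dualSupported s φ) :
    {j | ∃ z, φ (F.P j z) ≠ 0} ⊆ ↑s := by
  intro j hj
  obtain ⟨z, hz⟩ := hj
  by_contra hjs
  exact hz (F.dualSupported_P_eq_zero h hjs z)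

lemma dualMinSupp_mem {s : Finset ℕ} {φ : Z →L[ℝ] ℝ} (h : F.dualSupported s φ)
    (hφ : φ ≠ 0) : ∃ z, φ (F.P (F.dualMinSupp φ) z) ≠ 0 :=
  Nat.sInf_mem (F.dualSupp_nonempty h hφ)

lemma dualMinSupp_mem_finset {s : Finset ℕ} {φ : Z →L[ℝ] ℝ} (h : F.dualSupported s φ)
    (hφ : φ ≠ 0) : F.dualMinSupp φ ∈ s := by
  exact F.dualSupp_subset h (F.dualMinSupp_mem h hφ)

lemma apply_P_eq_zero_of_lt_dualMinSupp (φ : Z →L[ℝ] ℝ) {j : ℕ}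
    (hj : j < F.dualMinSupp φ) (z : Z) : φ (F.P j z) = 0 := by
  rw [dualMinSupp_def] at hj
  by_contra hne
  have : sInf {j | ∃ z, φ (F.P j z) ≠ 0} ≤ j :=
    Nat.sInf_le (⟨z, hne⟩ : j ∈ {j | ∃ z, φ (F.P j z) ≠ 0})
  omega

/-- A functional supported on `Ico a b` is computed via projection onto `Ico m b`
where `m` is its minimum support. -/
lemma apply_eq_proj_dualMinSupp {a b : ℕ} {φ : Z →L[ℝ] ℝ}
    (h : F.dualSupported (Finset.Ico a b) φ) (z : Z) :
    φ z = φ (F.proj (Finset.Ico (F.dualMinSupp φ) b) z) := by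
  rcases eq_or_ne φ 0 with rfl | hφ
  · simp
  have hm : F.dualMinSupp φ ∈ Finset.Ico a b := F.dualMinSupp_mem_finset h hφ
  rw [Finset.mem_Ico] at hm
  rw [F.dualSupported_apply_eq_sum h z]
  have hsub : Finset.Ico (F.dualMinSupp φ) b ⊆ Finset.Ico a b :=
    Finset.Ico_subset_Ico hm.1 le_rfl
  have heq : ∑ j ∈ Finset.Ico a b, φ (F.P j z) =
      ∑ j ∈ Finset.Ico (F.dualMinSupp φ) b, φ (F.P j z) := by
    refine (Finset.sum_subset hsub ?_).symm
    intro j hj hj'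
    rw [Finset.mem_Ico] at hj
    have : j < F.dualMinSupp φ := by
      by_contra hc
      exact hj' (Finset.mem_Ico.2 ⟨not_lt.1 hc, hj.2⟩)
    exact F.apply_P_eq_zero_of_lt_dualMinSupp φ this z
  rw [heq, F.proj_apply, map_sum]

lemma dualMinSupp_smul (φ : Z →L[ℝ] ℝ) {c : ℝ} (hc : c ≠ 0) :
    F.dualMinSupp (c • φ) = F.dualMinSupp φ := by
  rw [dualMinSupp_def, dualMinSupp_def]
  congr 1
  ext j
  constructor
  · rintro ⟨z, hz⟩
    refine ⟨z, fun h => hz ?_⟩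
    simp [ContinuousLinearMap.smul_apply, h]
  · rintro ⟨z, hz⟩
    refine ⟨z, fun h => hz ?_⟩
    simpa [ContinuousLinearMap.smul_apply, smul_eq_mul, mul_eq_zero, hc] using h

lemma dualMinSupp_eq {φ : Z →L[ℝ] ℝ} {m : ℕ} (hmem : ∃ z, φ (F.P m z) ≠ 0)
    (hlow : ∀ j < m, ∀ z : Z, φ (F.P j z) = 0) : F.dualMinSupp φ = m := by
  refine le_antisymm (Nat.sInf_le hmem) (le_csInf ⟨m, hmem⟩ ?_)
  rintro j ⟨z, hz⟩
  by_contra hc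
  exact hz (hlow j (by omega) z)

/-- `Ico`-version of the projection norm bound. -/
lemma proj_Ico_bound {B : ℝ} (hB : 1 ≤ B)
    (hproj : ∀ (m n : ℕ) (z : Z), ‖F.proj (Finset.Icc m n) z‖ ≤ B * ‖z‖)
    (a b : ℕ) (z : Z) : ‖F.proj (Finset.Ico a b) z‖ ≤ B * ‖z‖ := by
  rcases Nat.eq_zero_or_pos b with rfl | hb
  · have : F.proj (Finset.Ico a 0) z = 0 := by
      rw [F.proj_apply]; simp
    rw [this, norm_zero]
    positivity
  · have : Finset.Ico a b = Finset.Icc a (b - 1) := by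
      rw [← Finset.Ico_add_one_right_eq_Icc]
      congr 1
      omega
    rw [this]
    exact hproj a (b-1) z

lemma P_bound {B : ℝ} (hB : 1 ≤ B)
    (hproj : ∀ (m n : ℕ) (z : Z), ‖F.proj (Finset.Icc m n) z‖ ≤ B * ‖z‖)
    (m : ℕ) (z : Z) : ‖F.P m z‖ ≤ B * ‖z‖ := by
  have : F.proj (Finset.Icc m m) z = F.P m z := by
    rw [F.proj_apply, Finset.Icc_self, Finset.sum_singleton]
  rw [← this]
  exact hproj m m z

/-- Sum of consecutive interval projections. -/
lemma sum_proj_Ico (k : ℕ → ℕ) (hk : Monotone k) (n : ℕ) (z : Z) :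
    ∑ i ∈ Finset.range n, F.proj (Finset.Ico (k i) (k (i+1))) z =
      F.proj (Finset.Ico (k 0) (k n)) z := by
  induction n with
  | zero => rw [F.proj_apply]; simp
  | succ n ih =>
    rw [Finset.sum_range_succ, ih, F.proj_apply, F.proj_apply, F.proj_apply,
      ← Finset.sum_union]
    · congr 1
      exact Finset.Ico_union_Ico_eq_Ico (hk (Nat.zero_le n)) (hk (Nat.le_succ n))
    · exact Finset.Ico_disjoint_Ico_consecutive _ _ _

end FDD

end DualSupp


section BlockVec

variable {Z : Type*} [NormedAddCommGroup Z] [NormedSpace ℝ Z]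

/-- Given a norm-one functional supported on an interval, find a norm-one vector with
prescribed minimum support on which the functional is large. -/
lemma FDD.exists_block_vector (F : FDD Z) {B : ℝ} (hB : 1 ≤ B)
    (hproj : ∀ (m n : ℕ) (z : Z), ‖F.proj (Finset.Icc m n) z‖ ≤ B * ‖z‖)
    {a b : ℕ} {φ : Z →L[ℝ] ℝ} (hsupp : F.dualSupported (Finset.Ico a b) φ)
    (hφ : ‖φ‖ = 1) {ε : ℝ} (hε0 : 0 < ε) (hε : ε < 1/2) :
    ∃ z : Z, ‖z‖ = 1 ∧ F.supp z ⊆ Set.Ico (F.dualMinSupp φ) b ∧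
      F.minSupp z = F.dualMinSupp φ ∧ (1 - 2*ε)/(B + ε) ≤ φ z := by
  have hφne : φ ≠ 0 := by
    intro h; rw [h, norm_zero] at hφ; norm_num at hφ
  set m : ℕ := F.dualMinSupp φ with hm
  have hmmem : m ∈ Finset.Ico a b := F.dualMinSupp_mem_finset hsupp hφne
  have hmb : m < b := (Finset.mem_Ico.1 hmmem).2
  obtain ⟨y0, hy0, hφy0⟩ := exists_near_norming φ hφ hε0 (by linarith)
  set y1 : Z := F.proj (Finset.Ico m b) y0 with hy1
  have hφ1 : φ y1 = φ y0 := (F.apply_eq_proj_dualMinSupp hsupp y0).symm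
  have hny1 : ‖y1‖ ≤ B := by
    calc ‖y1‖ ≤ B * ‖y0‖ := F.proj_Ico_bound hB hproj m b y0
      _ ≤ B * 1 := mul_le_mul_of_nonneg_left hy0 (by linarith)
      _ = B := mul_one B
  have hsupp1 : F.supp y1 ⊆ Set.Ico m b := by
    refine (F.supp_proj_subset y0 (Finset.Ico m b)).trans ?_
    rw [Finset.coe_Ico]
    exact Set.inter_subset_left
  -- the perturbation vector
  obtain ⟨z0, hz0⟩ := F.dualMinSupp_mem hsupp hφne
  set e0 : Z := F.P m z0 with he0
  have he0ne : e0 ≠ 0 := fun h => hz0 (by rw [h, map_zero])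
  set e : Z := ‖e0‖⁻¹ • e0 with he
  have hne1 : ‖e‖ = 1 := by
    rw [he, norm_smul, Real.norm_eq_abs, abs_of_nonneg (inv_nonneg.2 (norm_nonneg _)),
      inv_mul_cancel₀ (norm_ne_zero_iff.2 he0ne)]
  have hPe : F.P m e = e := by
    rw [he, map_smul, he0, F.P_P, if_pos rfl]
  have hPje : ∀ j, j ≠ m → F.P j e = 0 := by
    intro j hj
    rw [he, map_smul, he0, F.P_P, if_neg hj, smul_zero]
  have hene : e ≠ 0 := by
    intro h
    rw [h, norm_zero] at hne1
    norm_num at hne1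
  -- define y2 by cases
  obtain ⟨y2, hφ2, hny2, hPm2, hsupp2⟩ :
      ∃ y2 : Z, 1 - 2*ε < φ y2 ∧ ‖y2‖ ≤ B + ε ∧ F.P m y2 ≠ 0 ∧
        F.supp y2 ⊆ Set.Ico m b := by
    by_cases hc : F.P m y1 = 0
    · refine ⟨y1 + ε • e, ?_, ?_, ?_, ?_⟩
      · have habs : |φ e| ≤ 1 := by
          calc |φ e| ≤ ‖φ‖ * ‖e‖ := φ.le_opNorm e
            _ = 1 := by rw [hφ, hne1, mul_one]
        have : φ (y1 + ε • e) = φ y1 + ε * φ e := by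
          rw [map_add, map_smul, smul_eq_mul]
        rw [this, hφ1]
        have : -(ε * 1) ≤ ε * φ e := by
          have := (abs_le.1 habs).1
          nlinarith
        nlinarith
      · calc ‖y1 + ε • e‖ ≤ ‖y1‖ + ‖ε • e‖ := norm_add_le _ _
          _ ≤ B + ε := by
            rw [norm_smul, Real.norm_eq_abs, abs_of_pos hε0, hne1, mul_one]
            linarith
      · rw [map_add, hc, zero_add, map_smul, hPe]
        exact smul_ne_zero (ne_of_gt hε0) hene
      · intro j hj
        simp only [FDD.supp, Set.mem_setOf_eq, map_add, map_smul] at hj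
        by_contra hjm
        have hj1 : F.P j y1 = 0 := by
          by_contra hne
          exact hjm (hsupp1 hne)
        have hj2 : F.P j e = 0 := by
          refine hPje j fun h => hjm ?_
          rw [h]
          exact Set.mem_Ico.2 ⟨le_rfl, hmb⟩
        rw [hj1, hj2, smul_zero, add_zero] at hj
        exact hj rfl
    · refine ⟨y1, by rw [hφ1]; linarith, by linarith, hc, hsupp1⟩
  have hφ2pos : 0 < φ y2 := by linarith
  have hny2pos : 0 < ‖y2‖ := by
    rcases eq_or_lt_of_le (norm_nonneg y2) with h | h
    · exfalso
      have : y2 = 0 := norm_eq_zero.1 h.symm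
      rw [this, map_zero] at hφ2pos
      exact lt_irrefl _ hφ2pos
    · exact h
  refine ⟨‖y2‖⁻¹ • y2, ?_, ?_, ?_, ?_⟩
  · rw [norm_smul, Real.norm_eq_abs, abs_of_nonneg (inv_nonneg.2 hny2pos.le),
      inv_mul_cancel₀ (ne_of_gt hny2pos)]
  · rw [F.supp_smul y2 _ (inv_ne_zero (ne_of_gt hny2pos))]
    exact hsupp2
  · refine F.minSupp_eq _ m ?_ ?_
    · rw [map_smul]
      simp only [ne_eq, smul_eq_zero, not_or]
      exact ⟨inv_ne_zero (ne_of_gt hny2pos), hPm2⟩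
    · rw [F.supp_smul y2 _ (inv_ne_zero (ne_of_gt hny2pos))]
      exact fun j hj => (hsupp2 hj).1
  · rw [map_smul, smul_eq_mul]
    have h1 : (1 - 2*ε)/(B + ε) ≤ φ y2 / (B + ε) :=
      div_le_div_of_nonneg_right hφ2.le (by linarith) |>.trans le_rfl
    have h2 : φ y2 / (B + ε) ≤ φ y2 / ‖y2‖ :=
      div_le_div_of_nonneg_left hφ2pos.le hny2pos hny2
    calc (1 - 2*ε)/(B + ε) ≤ φ y2 / ‖y2‖ := le_trans h1 h2
      _ = ‖y2‖⁻¹ * φ y2 := by rw [div_eq_mul_inv, mul_comm]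

end BlockVec


section MainDir1

variable {Z : Type*} [NormedAddCommGroup Z] [NormedSpace ℝ Z]
variable {V : Type*} [NormedAddCommGroup V] [NormedSpace ℝ V]
variable {W : Type*} [NormedAddCommGroup W] [NormedSpace ℝ W]

lemma FDD.upper_to_dualLower (F : FDD Z) (v : ℕ → V) (w : ℕ → W)
    (hvuncond : IsOneUnconditional v) (hvbasic : IsBasicSeq v) (hw : IsBiorthDual v w)
    {B C : ℝ} (hB : 1 ≤ B) (hC : 1 ≤ C)
    (hproj : ∀ (m n : ℕ) (z : Z), ‖F.proj (Finset.Icc m n) z‖ ≤ B * ‖z‖)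
    (hU : F.UpperBlockC v C) : F.DualLowerBlockC w (C * B) := by
  intro φ hblock hnorm a n
  obtain ⟨k, hk, hsupp⟩ := hblock
  have hφne : ∀ i, φ i ≠ 0 := by
    intro i h
    have := hnorm i
    rw [h, norm_zero] at this
    norm_num at this
  set m : ℕ → ℕ := fun i => F.dualMinSupp (φ i) with hm
  have hmmem : ∀ i, m i ∈ Finset.Ico (k i) (k (i+1)) :=
    fun i => F.dualMinSupp_mem_finset (hsupp i) (hφne i)
  have hmge : ∀ i, k i ≤ m i := fun i => (Finset.mem_Ico.1 (hmmem i)).1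
  have hmlt : ∀ i, m i < k (i+1) := fun i => (Finset.mem_Ico.1 (hmmem i)).2
  have hmmono : StrictMono m := by
    refine strictMono_nat_of_lt_succ fun i => ?_
    exact lt_of_lt_of_le (hmlt i) (hmge (i+1))
  have hminj : ∀ i i', i < n → i' < n → m i = m i' → i = i' :=
    fun i i' _ _ h => hmmono.injective h
  have hN : ∀ i < n, m i < k n := by
    intro i hi
    exact lt_of_lt_of_le (hmlt i) (hk.monotone (by omega))
  -- rewrite the LHS via coefficient extension
  rw [show ∑ i ∈ Finset.range n, a i • w (m i) =
      ∑ j ∈ Finset.range (k n), coefExt m a n j • w j from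
    (sum_coefExt m a n (k n) w hN).symm]
  refine (hw (coefExt m a n) (k n)).2 ?_
  rintro r ⟨b, hb, rfl⟩
  have hrw : ∑ j ∈ Finset.range (k n), coefExt m a n j * b j =
      ∑ i ∈ Finset.range n, a i * b (m i) := by
    have := sum_coefExt (M := ℝ) m a n (k n) b hN
    simpa [smul_eq_mul] using this
  rw [hrw]
  refine le_of_eps_bound₁ _ _ C B (norm_nonneg _) ?_
  intro ε hε0 hε
  have hq0 : 0 < (1 - 2*ε)/(B + ε) := div_pos (by linarith) (by linarith)
  -- choose block vectors
  have hex : ∀ i, ∃ z : Z, ‖z‖ = 1 ∧ F.supp z ⊆ Set.Ico (F.dualMinSupp (φ i)) (k (i+1)) ∧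
      F.minSupp z = F.dualMinSupp (φ i) ∧ (1 - 2*ε)/(B + ε) ≤ φ i z :=
    fun i => F.exists_block_vector hB hproj (hsupp i) (hnorm i) hε0 hε
  choose z hz1 hz2 hz3 hz4 using hex
  have hblockz : F.IsBlockSeq z :=
    ⟨k, hk, fun i => (hz2 i).trans (Set.Ico_subset_Ico (hmge i) le_rfl)⟩
  have hdom := hU z hblockz hz1
  have hφzpos : ∀ i, 0 < φ i (z i) := fun i => lt_of_lt_of_le hq0 (hz4 i)
  set d : ℕ → ℝ := fun i => b (m i) / φ i (z i) with hd
  -- cross terms vanish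
  have hcross : ∀ i j, i ≠ j → φ i (z j) = 0 := by
    intro i j hij
    rw [hsupp i (z j)]
    rw [F.proj_eq_zero]
    · exact map_zero _
    · intro l hl
      rw [Finset.mem_Ico] at hl
      by_contra hne
      have hsuppj : l ∈ F.supp (z j) := hne
      have := hz2 j hsuppj
      rw [Set.mem_Ico] at this
      have hkm : k j ≤ l := le_trans (hmge j) this.1
      rcases lt_or_gt_of_ne hij with h | h
      · have : k (i+1) ≤ k j := hk.monotone (by omega)
        omega
      · have : k (j+1) ≤ k i := hk.monotone (by omega)
        omega
  -- the key identity
  set Φ : Z →L[ℝ] ℝ := ∑ i ∈ Finset.range n, a i • φ i with hΦ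
  set ξ : Z := ∑ j ∈ Finset.range n, d j • z j with hξ
  have hkey : Φ ξ = ∑ i ∈ Finset.range n, a i * b (m i) := by
    rw [hΦ, ContinuousLinearMap.sum_apply]
    refine Finset.sum_congr rfl fun i hi => ?_
    rw [ContinuousLinearMap.smul_apply, smul_eq_mul, hξ, map_sum]
    have : ∀ j ∈ Finset.range n, φ i (d j • z j) = if j = i then b (m i) else 0 := by
      intro j _
      rw [map_smul, smul_eq_mul]
      by_cases hji : j = i
      · rw [if_pos hji, hji, hd]
        exact div_mul_cancel₀ _ (ne_of_gt (hφzpos i))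
      · rw [if_neg hji, hcross i j (fun h => hji h.symm), mul_zero]
    rw [Finset.sum_congr rfl this, Finset.sum_ite_eq' (Finset.range n) i fun _ => b (m i),
      if_pos (Finset.mem_range.2 (Finset.mem_range.1 hi))]
  -- estimate ‖ξ‖
  have hnormd : ‖∑ i ∈ Finset.range n, d i • v (m i)‖ ≤ (B + ε) / (1 - 2*ε) := by
    rw [show ∑ i ∈ Finset.range n, d i • v (m i) =
        ∑ j ∈ Finset.range (k n), coefExt m d n j • v j from (sum_coefExt m d n (k n) v hN).symm]
    have hcoef : ∀ j < k n, |coefExt m d n j| ≤ |((B + ε)/(1 - 2*ε)) * b j| := by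
      intro j _
      by_cases hex : ∃ i < n, m i = j
      · obtain ⟨i, hi, rfl⟩ := hex
        rw [coefExt_apply hminj _ hi]
        rw [hd, abs_mul, abs_div, abs_of_pos (hφzpos i)]
        have h1 : |b (m i)| / φ i (z i) ≤ |b (m i)| / ((1 - 2*ε)/(B + ε)) :=
          div_le_div_of_nonneg_left (abs_nonneg _) hq0 (hz4 i)
        refine h1.trans ?_
        have hc0 : (0:ℝ) < (B + ε)/(1 - 2*ε) :=
          div_pos (by linarith) (by linarith)
        rw [div_eq_mul_inv, inv_div, abs_of_pos hc0]
        exact le_of_eq (mul_comm _ _)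
      · push_neg at hex
        rw [coefExt_apply_zero _ hex, abs_zero]
        exact abs_nonneg _
    calc ‖∑ j ∈ Finset.range (k n), coefExt m d n j • v j‖
        ≤ ‖∑ j ∈ Finset.range (k n), (((B + ε)/(1 - 2*ε)) * b j) • v j‖ :=
          uncond_mono hvuncond _ _ _ hcoef
      _ = ((B + ε)/(1 - 2*ε)) * ‖∑ j ∈ Finset.range (k n), b j • v j‖ := by
          rw [show ∑ j ∈ Finset.range (k n), (((B + ε)/(1 - 2*ε)) * b j) • v j =
              ((B + ε)/(1 - 2*ε)) • ∑ j ∈ Finset.range (k n), b j • v j by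
            rw [Finset.smul_sum]
            exact Finset.sum_congr rfl fun j _ => by rw [smul_smul]]
          rw [norm_smul, Real.norm_eq_abs, abs_of_pos (div_pos (by linarith) (by linarith))]
      _ ≤ ((B + ε)/(1 - 2*ε)) * 1 :=
          mul_le_mul_of_nonneg_left hb (le_of_lt (div_pos (by linarith) (by linarith)))
      _ = (B + ε)/(1 - 2*ε) := mul_one _
  have hξnorm : ‖ξ‖ ≤ C * ((B + ε)/(1 - 2*ε)) := by
    have h1 := hdom d n
    have h2 : ∑ i ∈ Finset.range n, d i • v (F.minSupp (z i)) =
        ∑ i ∈ Finset.range n, d i • v (m i) := by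
      refine Finset.sum_congr rfl fun i _ => by rw [hz3]
    rw [h2] at h1
    calc ‖ξ‖ ≤ C * ‖∑ i ∈ Finset.range n, d i • v (m i)‖ := h1
      _ ≤ C * ((B + ε)/(1 - 2*ε)) :=
          mul_le_mul_of_nonneg_left hnormd (by linarith)
  calc ∑ i ∈ Finset.range n, a i * b (m i) = Φ ξ := hkey.symm
    _ ≤ |Φ ξ| := le_abs_self _
    _ ≤ ‖Φ‖ * ‖ξ‖ := Φ.le_opNorm ξ
    _ ≤ ‖Φ‖ * (C * ((B + ε)/(1 - 2*ε))) :=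
        mul_le_mul_of_nonneg_left hξnorm (norm_nonneg _)
    _ = C * ((B + ε)/(1 - 2*ε)) * ‖Φ‖ := by ring

end MainDir1


section MainDir2

variable {Z : Type*} [NormedAddCommGroup Z] [NormedSpace ℝ Z]
variable {V : Type*} [NormedAddCommGroup V] [NormedSpace ℝ V]
variable {W : Type*} [NormedAddCommGroup W] [NormedSpace ℝ W]

lemma dualSupported_smul {F : FDD Z} {s : Finset ℕ} {φ : Z →L[ℝ] ℝ}
    (h : F.dualSupported s φ) (c : ℝ) : F.dualSupported s (c • φ) := by
  intro y
  simp only [ContinuousLinearMap.smul_apply, smul_eq_mul]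
  rw [← h y]

set_option maxHeartbeats 1000000 in
lemma FDD.dualLower_to_upper (F : FDD Z) (v : ℕ → V) (w : ℕ → W)
    (hvuncond : IsOneUnconditional v) (hvbasic : IsBasicSeq v) (hw : IsBiorthDual v w)
    {B C : ℝ} (hB : 1 ≤ B) (hC : 1 ≤ C)
    (hproj : ∀ (m n : ℕ) (z : Z), ‖F.proj (Finset.Icc m n) z‖ ≤ B * ‖z‖)
    (hL : F.DualLowerBlockC w C) : F.UpperBlockC v (C * B) := by
  intro z hblock hnorm a n
  obtain ⟨k, hk, hsupp⟩ := hblock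
  rcases Nat.eq_zero_or_pos n with rfl | hn
  · simp
  have hzne : ∀ i, z i ≠ 0 := by
    intro i h
    have := hnorm i
    rw [h, norm_zero] at this
    norm_num at this
  set m : ℕ → ℕ := fun i => F.minSupp (z i) with hm
  have hmmem : ∀ i, F.P (m i) (z i) ≠ 0 :=
    fun i => Nat.sInf_mem (F.supp_nonempty (z i) (hzne i))
  have hmrange : ∀ i, k i ≤ m i ∧ m i < k (i+1) := by
    intro i
    have := hsupp i (hmmem i)
    rwa [Set.mem_Ico] at this
  have hsupplow : ∀ i, F.supp (z i) ⊆ Set.Ico (m i) (k (i+1)) := by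
    intro i j hj
    exact Set.mem_Ico.2 ⟨Nat.sInf_le hj, (Set.mem_Ico.1 (hsupp i hj)).2⟩
  have hmmono : StrictMono m := by
    refine strictMono_nat_of_lt_succ fun i => ?_
    exact lt_of_lt_of_le (hmrange i).2 (hmrange (i+1)).1
  have hminj : ∀ i i', i < n → i' < n → m i = m i' → i = i' :=
    fun i i' _ _ h => hmmono.injective h
  have hN : ∀ i < n, m i < k n :=
    fun i hi => lt_of_lt_of_le (hmrange i).2 (hk.monotone (by omega))
  set x : Z := ∑ i ∈ Finset.range n, a i • z i with hx
  by_cases hx0 : x = 0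
  · rw [hx0, norm_zero]
    exact mul_nonneg (mul_nonneg (by linarith) (by linarith)) (norm_nonneg _)
  obtain ⟨g, hg1, hgx⟩ := exists_dual_vector ℝ x (norm_ne_zero_iff.mpr hx0)
  refine le_of_eps_bound₂ ‖x‖ _ C B (B * ∑ i ∈ Finset.range n, |a i|) ?_
  intro ε hε0 hε
  set q : ℝ := ε / (n + 1) with hq
  have hq0 : 0 < q := by positivity
  have hqε : q ≤ ε := by
    rw [hq, div_le_iff₀ (by positivity)]
    nlinarith [Nat.cast_nonneg (α := ℝ) n]
  -- the perturbation data
  set e : ℕ → Z := fun i => F.P (m i) (z i) with he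
  have hene : ∀ i, e i ≠ 0 := hmmem
  have henorm : ∀ i, ‖e i‖ ≤ B := by
    intro i
    calc ‖e i‖ ≤ B * ‖z i‖ := F.P_bound hB hproj (m i) (z i)
      _ = B := by rw [hnorm i, mul_one]
  have hepos : ∀ i, 0 < ‖e i‖ := fun i => norm_pos_iff.2 (hene i)
  have hhex : ∀ i, ∃ h : Z →L[ℝ] ℝ, ‖h‖ = 1 ∧ h (e i) = ‖e i‖ :=
    fun i => exists_dual_vector ℝ (e i) (norm_ne_zero_iff.mpr (hene i))
  choose h hh1 hh2 using hhex
  -- the interval endpoints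
  set k' : ℕ → ℕ := fun i => if i < n then m i else k i with hk'def
  have hk'mono : StrictMono k' := by
    refine strictMono_nat_of_lt_succ fun i => ?_
    by_cases hi : i < n
    · simp only [hk'def]
      rw [if_pos hi]
      by_cases hi1 : i + 1 < n
      · rw [if_pos hi1]; exact hmmono (by omega)
      · rw [if_neg hi1]
        have hieq : i + 1 = n := by omega
        calc m i < k (i+1) := (hmrange i).2
          _ ≤ k (i+1) := le_rfl
    · simp only [hk'def]
      have hi1 : ¬ (i + 1 < n) := by omega
      rw [if_neg hi, if_neg hi1]
      exact hk (by omega)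
  have hk'lt : ∀ i, i < n → k' i = m i := by
    intro i hi; simp only [hk'def]; rw [if_pos hi]
  have hk'ge : ∀ i, n ≤ i → k' i = k i := by
    intro i hi; simp only [hk'def]; rw [if_neg (Nat.not_lt.2 hi)]
  have hk'ub : ∀ i, i < n → k (i+1) ≤ k' (i+1) := by
    intro i hi
    by_cases hi1 : i + 1 < n
    · rw [hk'lt _ hi1]; exact (hmrange (i+1)).1
    · rw [hk'ge _ (by omega)]
  have hmmemI : ∀ i, i < n → m i ∈ Finset.Ico (k' i) (k' (i+1)) := by
    intro i hi
    rw [Finset.mem_Ico, hk'lt i hi]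
    exact ⟨le_rfl, lt_of_lt_of_le (hmrange i).2 (hk'ub i hi)⟩
  have hmmemI' : ∀ i, n ≤ i → m i ∈ Finset.Ico (k' i) (k' (i+1)) := by
    intro i hi
    rw [Finset.mem_Ico, hk'ge i hi, hk'ge (i+1) (by omega)]
    exact ⟨(hmrange i).1, (hmrange i).2⟩
  have hmmemIall : ∀ i, m i ∈ Finset.Ico (k' i) (k' (i+1)) := by
    intro i
    by_cases hi : i < n
    · exact hmmemI i hi
    · exact hmmemI' i (by omega)
  -- the perturbation sizes
  set δ : ℕ → ℝ := fun i => if g (e i) + q * ‖e i‖ = 0 then q/2 else q with hδdef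
  have hδpos : ∀ i, 0 < δ i := by
    intro i; simp only [hδdef]
    by_cases hc : g (e i) + q * ‖e i‖ = 0 <;> simp [hc] <;> linarith
  have hδle : ∀ i, δ i ≤ q := by
    intro i; simp only [hδdef]
    by_cases hc : g (e i) + q * ‖e i‖ = 0 <;> simp [hc] <;> linarith
  have hpin0 : ∀ i, g (e i) + δ i * ‖e i‖ ≠ 0 := by
    intro i
    simp only [hδdef]
    by_cases hc : g (e i) + q * ‖e i‖ = 0
    · rw [if_pos hc]
      have hg_ei : g (e i) = -(q * ‖e i‖) := by linarith
      rw [hg_ei]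
      have := hepos i
      intro hcon
      nlinarith
    · rw [if_neg hc]
      exact hc
  -- the functionals
  set φ' : ℕ → (Z →L[ℝ] ℝ) := fun i =>
    if i < n then
      g.comp (F.proj (Finset.Ico (k' i) (k' (i+1)))) + δ i • ((h i).comp (F.P (m i)))
    else (h i).comp (F.P (m i)) with hφ'def
  have hφ'lt : ∀ i, i < n → φ' i =
      g.comp (F.proj (Finset.Ico (k' i) (k' (i+1)))) + δ i • ((h i).comp (F.P (m i))) := by
    intro i hi; simp only [hφ'def]; rw [if_pos hi]
  have hφ'ge : ∀ i, n ≤ i → φ' i = (h i).comp (F.P (m i)) := by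
    intro i hi; simp only [hφ'def]; rw [if_neg (Nat.not_lt.2 hi)]
  -- e i is fixed by the relevant projections
  have hPe : ∀ i, F.P (m i) (e i) = e i := by
    intro i; rw [he, F.P_P, if_pos rfl]
  have hproje : ∀ i, F.proj (Finset.Ico (k' i) (k' (i+1))) (e i) = e i := by
    intro i
    rw [he, F.proj_P, if_pos (hmmemIall i)]
  -- φ' i is nonzero
  have hφ'val : ∀ i, i < n → φ' i (e i) = g (e i) + δ i * ‖e i‖ := by
    intro i hi
    rw [hφ'lt i hi]
    simp only [ContinuousLinearMap.add_apply, ContinuousLinearMap.comp_apply,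
      ContinuousLinearMap.smul_apply, smul_eq_mul]
    rw [hproje i, hPe i, hh2 i]
  have hφ'ne : ∀ i, φ' i ≠ 0 := by
    intro i hcon
    by_cases hi : i < n
    · have := hφ'val i hi
      rw [hcon] at this
      simp only [ContinuousLinearMap.zero_apply] at this
      exact hpin0 i this.symm
    · have : φ' i (z i) = ‖e i‖ := by
        rw [hφ'ge i (by omega)]
        simp only [ContinuousLinearMap.comp_apply]
        exact hh2 i
      rw [hcon] at this
      simp only [ContinuousLinearMap.zero_apply] at this
      exact absurd this.symm (ne_of_gt (hepos i))
  set t : ℕ → ℝ := fun i => ‖φ' i‖ with ht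
  have htpos : ∀ i, 0 < t i := fun i => norm_pos_iff.2 (hφ'ne i)
  set ψ : ℕ → (Z →L[ℝ] ℝ) := fun i => (t i)⁻¹ • φ' i with hψ
  have hψnorm : ∀ i, ‖ψ i‖ = 1 := by
    intro i
    simp only [hψ]
    have hns := norm_smul ((t i)⁻¹) (φ' i)
    rw [hns, Real.norm_eq_abs, abs_of_nonneg (inv_nonneg.2 (htpos i).le)]
    exact inv_mul_cancel₀ (ne_of_gt (htpos i))
  -- dual supported
  have hds : ∀ i, F.dualSupported (Finset.Ico (k' i) (k' (i+1))) (φ' i) := by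
    intro i y
    by_cases hi : i < n
    · rw [hφ'lt i hi]
      simp only [ContinuousLinearMap.add_apply, ContinuousLinearMap.comp_apply,
        ContinuousLinearMap.smul_apply, smul_eq_mul]
      rw [F.proj_proj, Finset.inter_self, F.P_proj, if_pos (hmmemIall i)]
    · rw [hφ'ge i (by omega)]
      simp only [ContinuousLinearMap.comp_apply]
      rw [F.P_proj, if_pos (hmmemIall i)]
  have hdsψ : ∀ i, F.dualSupported (Finset.Ico (k' i) (k' (i+1))) (ψ i) :=
    fun i => dualSupported_smul (hds i) _
  have hdualblock : F.IsDualBlockSeq ψ := ⟨k', hk'mono, hdsψ⟩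
  -- minimal support of φ' i is m i, for i < n
  have hdms : ∀ i, i < n → F.dualMinSupp (φ' i) = m i := by
    intro i hi
    refine F.dualMinSupp_eq ⟨e i, ?_⟩ ?_
    · rw [hPe i, hφ'val i hi]
      exact hpin0 i
    · intro j hj y
      rw [hφ'lt i hi]
      simp only [ContinuousLinearMap.add_apply, ContinuousLinearMap.comp_apply,
        ContinuousLinearMap.smul_apply, smul_eq_mul]
      have h1 : F.proj (Finset.Ico (k' i) (k' (i+1))) (F.P j y) = 0 := by
        rw [F.proj_P, if_neg]
        rw [Finset.mem_Ico, hk'lt i hi]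
        omega
      have h2 : F.P (m i) (F.P j y) = 0 := by
        rw [F.P_P, if_neg (by omega)]
      rw [h1, h2, map_zero, map_zero, mul_zero, add_zero]
  have hdmsψ : ∀ i, i < n → F.dualMinSupp (ψ i) = m i := by
    intro i hi
    simp only [hψ]
    rw [F.dualMinSupp_smul _ (inv_ne_zero (ne_of_gt (htpos i)))]
    exact hdms i hi
  -- apply the hypothesis
  have hdom := hL ψ hdualblock hψnorm t n
  have hdom' : ‖∑ i ∈ Finset.range n, t i • w (m i)‖ ≤
      C * ‖∑ i ∈ Finset.range n, φ' i‖ := by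
    have h1 : ∑ i ∈ Finset.range n, t i • w (F.dualMinSupp (ψ i)) =
        ∑ i ∈ Finset.range n, t i • w (m i) := by
      refine Finset.sum_congr rfl fun i hi => ?_
      rw [hdmsψ i (Finset.mem_range.1 hi)]
    have h2 : ∑ i ∈ Finset.range n, t i • ψ i = ∑ i ∈ Finset.range n, φ' i := by
      refine Finset.sum_congr rfl fun i _ => ?_
      simp only [hψ]
      exact smul_inv_smul₀ (ne_of_gt (htpos i)) _
    rw [h1, h2] at hdom
    exact hdom
  -- bound on the sum of the functionals
  have hsumδ : ∑ i ∈ Finset.range n, δ i ≤ ε := by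
    calc ∑ i ∈ Finset.range n, δ i ≤ ∑ i ∈ Finset.range n, q :=
        Finset.sum_le_sum fun i _ => hδle i
      _ = n * q := by rw [Finset.sum_const, Finset.card_range, nsmul_eq_mul]
      _ ≤ ε := by
          rw [hq]
          have hn1 : (0:ℝ) < (n:ℝ) + 1 := by positivity
          have h1 : (n:ℝ) * (ε / ((n:ℝ)+1)) ≤ ((n:ℝ)+1) * (ε / ((n:ℝ)+1)) :=
            mul_le_mul_of_nonneg_right (by linarith) (by positivity)
          have h2 : ((n:ℝ)+1) * (ε / ((n:ℝ)+1)) = ε := by field_simp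
          linarith
  -- norm bound on the sum of functionals
  have hΦnorm : ‖∑ i ∈ Finset.range n, φ' i‖ ≤ B * (1 + ε) := by
    refine ContinuousLinearMap.opNorm_le_bound _ (by nlinarith) fun y => ?_
    have hval : (∑ i ∈ Finset.range n, φ' i) y =
        g (F.proj (Finset.Ico (k' 0) (k' n)) y) +
        ∑ i ∈ Finset.range n, δ i * h i (F.P (m i) y) := by
      rw [ContinuousLinearMap.sum_apply]
      have : ∀ i ∈ Finset.range n, φ' i y =
          g (F.proj (Finset.Ico (k' i) (k' (i+1))) y) + δ i * h i (F.P (m i) y) := by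
        intro i hi
        rw [hφ'lt i (Finset.mem_range.1 hi)]
        simp only [ContinuousLinearMap.add_apply, ContinuousLinearMap.comp_apply,
          ContinuousLinearMap.smul_apply, smul_eq_mul]
      rw [Finset.sum_congr rfl this, Finset.sum_add_distrib, ← map_sum,
        F.sum_proj_Ico k' hk'mono.monotone n y]
    rw [hval]
    have h1 : ‖g (F.proj (Finset.Ico (k' 0) (k' n)) y)‖ ≤ B * ‖y‖ := by
      calc ‖g (F.proj (Finset.Ico (k' 0) (k' n)) y)‖
          ≤ ‖g‖ * ‖F.proj (Finset.Ico (k' 0) (k' n)) y‖ := g.le_opNorm _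
        _ = ‖F.proj (Finset.Ico (k' 0) (k' n)) y‖ := by rw [hg1, one_mul]
        _ ≤ B * ‖y‖ := F.proj_Ico_bound hB hproj _ _ y
    have h2 : ‖∑ i ∈ Finset.range n, δ i * h i (F.P (m i) y)‖ ≤ ε * (B * ‖y‖) := by
      calc ‖∑ i ∈ Finset.range n, δ i * h i (F.P (m i) y)‖
          ≤ ∑ i ∈ Finset.range n, ‖δ i * h i (F.P (m i) y)‖ := norm_sum_le _ _
        _ ≤ ∑ i ∈ Finset.range n, δ i * (B * ‖y‖) := by
            refine Finset.sum_le_sum fun i _ => ?_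
            rw [norm_mul, Real.norm_eq_abs, abs_of_pos (hδpos i)]
            refine mul_le_mul_of_nonneg_left ?_ (hδpos i).le
            calc ‖h i (F.P (m i) y)‖ ≤ ‖h i‖ * ‖F.P (m i) y‖ := (h i).le_opNorm _
              _ = ‖F.P (m i) y‖ := by rw [hh1 i, one_mul]
              _ ≤ B * ‖y‖ := F.P_bound hB hproj _ y
        _ = (∑ i ∈ Finset.range n, δ i) * (B * ‖y‖) := (Finset.sum_mul _ _ _).symm
        _ ≤ ε * (B * ‖y‖) := by
            refine mul_le_mul_of_nonneg_right hsumδ ?_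
            positivity
    calc ‖g (F.proj (Finset.Ico (k' 0) (k' n)) y) +
          ∑ i ∈ Finset.range n, δ i * h i (F.P (m i) y)‖
        ≤ ‖g (F.proj (Finset.Ico (k' 0) (k' n)) y)‖ +
          ‖∑ i ∈ Finset.range n, δ i * h i (F.P (m i) y)‖ := norm_add_le _ _
      _ ≤ B * ‖y‖ + ε * (B * ‖y‖) := add_le_add h1 h2
      _ = B * (1 + ε) * ‖y‖ := by ring
  -- the value of g on the block vectors
  have hprojz : ∀ i, i < n → F.proj (Finset.Ico (k' i) (k' (i+1))) (z i) = z i := by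
    intro i hi
    refine F.proj_eq_self (z i) _ ?_
    refine (hsupplow i).trans ?_
    rw [Finset.coe_Ico]
    refine Set.Ico_subset_Ico ?_ (hk'ub i hi)
    rw [hk'lt i hi]
  have hgz : ∀ i, i < n → g (z i) = φ' i (z i) - δ i * ‖e i‖ := by
    intro i hi
    have : φ' i (z i) = g (z i) + δ i * ‖e i‖ := by
      rw [hφ'lt i hi]
      simp only [ContinuousLinearMap.add_apply, ContinuousLinearMap.comp_apply,
        ContinuousLinearMap.smul_apply, smul_eq_mul]
      rw [hprojz i hi, hh2 i]
    rw [this]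
    ring
  have hgx' : g x = ‖x‖ := hgx
  have hxval : ‖x‖ = ∑ i ∈ Finset.range n, a i * (φ' i (z i) - δ i * ‖e i‖) := by
    rw [← hgx', hx, map_sum]
    refine Finset.sum_congr rfl fun i hi => ?_
    rw [map_smul, smul_eq_mul, hgz i (Finset.mem_range.1 hi)]
  -- bound each term
  have hterm : ∀ i ∈ Finset.range n, a i * (φ' i (z i) - δ i * ‖e i‖) ≤
      |a i| * t i + |a i| * (ε * B) := by
    intro i hi
    have h1 : |φ' i (z i)| ≤ t i := by
      calc |φ' i (z i)| = ‖φ' i (z i)‖ := (Real.norm_eq_abs _).symm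
        _ ≤ ‖φ' i‖ * ‖z i‖ := (φ' i).le_opNorm _
        _ = t i := by rw [hnorm i, mul_one]
    have h2 : δ i * ‖e i‖ ≤ ε * B :=
      mul_le_mul ((hδle i).trans hqε) (henorm i) (norm_nonneg _) hε0.le
    have h3 : a i * (φ' i (z i) - δ i * ‖e i‖) ≤
        |a i| * |φ' i (z i)| + |a i| * (δ i * ‖e i‖) := by
      have := abs_mul (a i) (φ' i (z i) - δ i * ‖e i‖)
      have habs := le_abs_self (a i * (φ' i (z i) - δ i * ‖e i‖))
      have h4 : |φ' i (z i) - δ i * ‖e i‖| ≤ |φ' i (z i)| + δ i * ‖e i‖ := by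
        refine (abs_sub _ _).trans ?_
        rw [abs_of_nonneg (mul_nonneg (hδpos i).le (norm_nonneg _))]
      calc a i * (φ' i (z i) - δ i * ‖e i‖) ≤ |a i * (φ' i (z i) - δ i * ‖e i‖)| := habs
        _ = |a i| * |φ' i (z i) - δ i * ‖e i‖| := abs_mul _ _
        _ ≤ |a i| * (|φ' i (z i)| + δ i * ‖e i‖) :=
            mul_le_mul_of_nonneg_left h4 (abs_nonneg _)
        _ = |a i| * |φ' i (z i)| + |a i| * (δ i * ‖e i‖) := by ring
    calc a i * (φ' i (z i) - δ i * ‖e i‖)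
        ≤ |a i| * |φ' i (z i)| + |a i| * (δ i * ‖e i‖) := h3
      _ ≤ |a i| * t i + |a i| * (ε * B) :=
          add_le_add (mul_le_mul_of_nonneg_left h1 (abs_nonneg _))
            (mul_le_mul_of_nonneg_left h2 (abs_nonneg _))
  -- the pairing estimate
  have hpair : ∑ i ∈ Finset.range n, |a i| * t i ≤
      ‖∑ i ∈ Finset.range n, |a i| • v (m i)‖ * ‖∑ i ∈ Finset.range n, t i • w (m i)‖ := by
    have h1 := biorth_pairing hvbasic hw (coefExt m t n) (coefExt m (fun i => |a i|) n) (k n)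
    have h2 : ∑ j ∈ Finset.range (k n), coefExt m t n j * coefExt m (fun i => |a i|) n j =
        ∑ i ∈ Finset.range n, |a i| * t i := by
      have h3 := sum_coefExt (M := ℝ) m t n (k n) (coefExt m (fun i => |a i|) n) hN
      simp only [smul_eq_mul] at h3
      rw [h3]
      refine Finset.sum_congr rfl fun i hi => ?_
      rw [coefExt_apply hminj _ (Finset.mem_range.1 hi), mul_comm]
    have h4 : ∑ j ∈ Finset.range (k n), coefExt m (fun i => |a i|) n j • v j =
        ∑ i ∈ Finset.range n, |a i| • v (m i) := sum_coefExt m _ n (k n) v hN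
    have h5 : ∑ j ∈ Finset.range (k n), coefExt m t n j • w j =
        ∑ i ∈ Finset.range n, t i • w (m i) := sum_coefExt m t n (k n) w hN
    rw [h2, h4, h5] at h1
    exact h1
  -- unconditionality : |a| can be replaced by a
  have habs : ‖∑ i ∈ Finset.range n, |a i| • v (m i)‖ =
      ‖∑ i ∈ Finset.range n, a i • v (m i)‖ := by
    rw [← sum_coefExt m (fun i => |a i|) n (k n) v hN, ← sum_coefExt m a n (k n) v hN]
    have : ∀ j ∈ Finset.range (k n), coefExt m (fun i => |a i|) n j • v j =
        |coefExt m a n j| • v j := by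
      intro j _
      rw [coefExt_abs m a n j hminj]
    rw [Finset.sum_congr rfl this]
    exact uncond_abs hvuncond (coefExt m a n) (k n)
  -- putting it together
  calc ‖x‖ = ∑ i ∈ Finset.range n, a i * (φ' i (z i) - δ i * ‖e i‖) := hxval
    _ ≤ ∑ i ∈ Finset.range n, (|a i| * t i + |a i| * (ε * B)) :=
        Finset.sum_le_sum hterm
    _ = ∑ i ∈ Finset.range n, |a i| * t i + ε * (B * ∑ i ∈ Finset.range n, |a i|) := by
        rw [Finset.sum_add_distrib]
        congr 1
        rw [Finset.mul_sum, Finset.mul_sum]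
        exact Finset.sum_congr rfl fun i _ => by ring
    _ ≤ ‖∑ i ∈ Finset.range n, |a i| • v (m i)‖ * ‖∑ i ∈ Finset.range n, t i • w (m i)‖ +
        ε * (B * ∑ i ∈ Finset.range n, |a i|) := by
        exact add_le_add hpair le_rfl
    _ ≤ ‖∑ i ∈ Finset.range n, |a i| • v (m i)‖ * (C * (B * (1 + ε))) +
        ε * (B * ∑ i ∈ Finset.range n, |a i|) := by
        refine add_le_add (mul_le_mul_of_nonneg_left ?_ (norm_nonneg _)) le_rfl
        refine hdom'.trans ?_
        exact mul_le_mul_of_nonneg_left hΦnorm (by linarith)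
    _ = C * B * (1 + ε) * ‖∑ i ∈ Finset.range n, |a i| • v (m i)‖ +
        ε * (B * ∑ i ∈ Finset.range n, |a i|) := by ring
    _ = C * B * (1 + ε) * ‖∑ i ∈ Finset.range n, a i • v (m i)‖ +
        ε * (B * ∑ i ∈ Finset.range n, |a i|) := by rw [habs]

end MainDir2

end Aux






/-- Proposition 2.2 (= [OSZ2, Proposition 2.14]): duality between subsequential `V`
upper block estimates in `Z` and subsequential `V^*` lower block estimates in `Z^(*)`. -/
theorem upper_block_iff_dual_lower_block
    {Z : Type*} [NormedAddCommGroup Z] [NormedSpace ℝ Z] [CompleteSpace Z]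
    {V : Type*} [NormedAddCommGroup V] [NormedSpace ℝ V] [CompleteSpace V]
    {W : Type*} [NormedAddCommGroup W] [NormedSpace ℝ W] [CompleteSpace W]
    (F : FDD Z) (v : ℕ → V) (w : ℕ → W)
    (hvnorm : IsNormalized v) (hvuncond : IsOneUnconditional v)
    (hvbasic : IsBasicSeq v) (hw : IsBiorthDual v w) :
    (F.UpperBlock v ↔ F.DualLowerBlock w) ∧
    (F.Bimonotone → ∀ C : ℝ, 1 ≤ C → (F.UpperBlockC v C ↔ F.DualLowerBlockC w C)) := by
  constructor
  · obtain ⟨B, hB, hproj⟩ := F.exists_proj_bound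
    constructor
    · rintro ⟨C, hC, hU⟩
      exact ⟨C * B, by nlinarith,
        F.upper_to_dualLower v w hvuncond hvbasic hw hB hC hproj hU⟩
    · rintro ⟨C, hC, hLo⟩
      exact ⟨C * B, by nlinarith,
        F.dualLower_to_upper v w hvuncond hvbasic hw hB hC hproj hLo⟩
  · intro hbi C hC
    have hproj1 : ∀ (m n : ℕ) (z : Z), ‖F.proj (Finset.Icc m n) z‖ ≤ 1 * ‖z‖ := by
      intro m n z
      rw [one_mul]
      exact hbi m n z
    constructor
    · intro hU
      have := F.upper_to_dualLower v w hvuncond hvbasic hw le_rfl hC hproj1 hU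
      rwa [mul_one] at this
    · intro hLo
      have := F.dualLower_to_upper v w hvuncond hvbasic hw le_rfl hC hproj1 hLo
      rwa [mul_one] at this
end
end

section
/- Let X be a Banach space with separable dual, and let V = (v_i) be a normalized, 1-unconditional, right dominant basic sequence. If X satisfies subsequential V upper tree estimates, then X* satisfies subsequential V* lower w* tree estimates, where V* = (v_i*) is the sequence of biorthogonal functionals of V. -/
open Filter Topology Set

noncomputable section

namespace OSZAux

variable {V : Type*} [NormedAddCommGroup V] [NormedSpace ℝ V]

def epsF (k : ℕ) : ℝ := (1/2 : ℝ)^(2*k)/100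

lemma epsF_pos (k : ℕ) : 0 < epsF k := by
  have : (0:ℝ) < (1/2 : ℝ)^(2*k) := by positivity
  unfold epsF; linarith

lemma epsF_anti {k k' : ℕ} (h : k ≤ k') : epsF k' ≤ epsF k := by
  unfold epsF
  have : (1/2 : ℝ)^(2*k') ≤ (1/2:ℝ)^(2*k) :=
    pow_le_pow_of_le_one (by norm_num) (by norm_num) (by omega)
  linarith


/-- extension of coefficients along an injection -/
def extSeq (m : ℕ → ℕ) (N : ℕ) (b : ℕ → ℝ) (i : ℕ) : ℝ :=
  ∑ l ∈ (Finset.range N).filter (fun l => m l = i), b l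

lemma extSeq_sum (m : ℕ → ℕ) (N : ℕ) (b : ℕ → ℝ) (v : ℕ → V) {M : ℕ}
    (hM : ∀ l < N, m l < M) :
    ∑ i ∈ Finset.range M, extSeq m N b i • v i = ∑ l ∈ Finset.range N, b l • v (m l) := by
  have : ∀ i ∈ Finset.range M, extSeq m N b i • v i
      = ∑ l ∈ (Finset.range N).filter (fun l => m l = i), b l • v (m l) := by
    intro i _
    rw [extSeq, Finset.sum_smul]
    refine Finset.sum_congr rfl ?_
    intro l hl
    rw [(Finset.mem_filter.1 hl).2]
  rw [Finset.sum_congr rfl this]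
  exact Finset.sum_fiberwise_of_maps_to (fun l hl => Finset.mem_range.2 (hM l (Finset.mem_range.1 hl))) _

lemma extSeq_apply (m : ℕ → ℕ) (hm : StrictMono m) (N : ℕ) (b : ℕ → ℝ) {l : ℕ} (hl : l < N) :
    extSeq m N b (m l) = b l := by
  have : (Finset.range N).filter (fun l' => m l' = m l) = {l} := by
    ext l'
    simp only [Finset.mem_filter, Finset.mem_range, Finset.mem_singleton]
    constructor
    · rintro ⟨_, h2⟩; exact hm.injective h2
    · rintro rfl; exact ⟨hl, rfl⟩
  rw [extSeq, this, Finset.sum_singleton]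

lemma extSeq_abs_le (m : ℕ → ℕ) (hm : StrictMono m) (N : ℕ) {b c : ℕ → ℝ}
    (h : ∀ l, |c l| ≤ |b l|) (i : ℕ) : |extSeq m N c i| ≤ |extSeq m N b i| := by
  by_cases hmem : ∃ l, l < N ∧ m l = i
  · obtain ⟨l, hl, rfl⟩ := hmem
    rw [extSeq_apply m hm N _ hl, extSeq_apply m hm N _ hl]; exact h l
  · have : (Finset.range N).filter (fun l => m l = i) = ∅ := by
      refine Finset.filter_eq_empty_iff.2 ?_
      intro l hl hli
      exact hmem ⟨l, Finset.mem_range.1 hl, hli⟩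
    rw [extSeq, extSeq, this]; simp


/-- convexity in one coefficient -/
lemma norm_add_smul_le (A w : V) {t : ℝ} (ht : |t| ≤ 1) :
    ‖A + t • w‖ ≤ max ‖A + w‖ ‖A - w‖ := by
  have h1 : t + 1 ≥ 0 := by cases abs_le.1 ht; linarith
  have h2 : 1 - t ≥ 0 := by cases abs_le.1 ht; linarith
  have key : A + t • w = ((t+1)/2) • (A + w) + ((1-t)/2) • (A - w) := by
    module
  rw [key]
  calc ‖((t+1)/2) • (A + w) + ((1-t)/2) • (A - w)‖
      ≤ ‖((t+1)/2) • (A + w)‖ + ‖((1-t)/2) • (A - w)‖ := norm_add_le _ _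
    _ = ((t+1)/2) * ‖A + w‖ + ((1-t)/2) * ‖A - w‖ := by
        rw [norm_smul, norm_smul, Real.norm_eq_abs, Real.norm_eq_abs,
          abs_of_nonneg (by linarith), abs_of_nonneg (by linarith)]
    _ ≤ ((t+1)/2) * max ‖A + w‖ ‖A - w‖ + ((1-t)/2) * max ‖A + w‖ ‖A - w‖ := by
        gcongr
        · exact le_max_left _ _
        · exact le_max_right _ _
    _ = max ‖A + w‖ ‖A - w‖ := by ring

/-- CORE lattice property of 1-unconditional sequences -/
lemma lattice_core {v : ℕ → V} (hv : IsOneUnconditional v) (b c : ℕ → ℝ) (M : ℕ)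
    (h : ∀ i, |c i| ≤ |b i|) :
    ‖∑ i ∈ Finset.range M, c i • v i‖ ≤ ‖∑ i ∈ Finset.range M, b i • v i‖ := by
  -- mixed coefficients
  set mix : ℕ → ℕ → ℝ := fun j i => if i < j then c i else b i with hmix
  have key : ∀ j, ‖∑ i ∈ Finset.range M, mix j i • v i‖ ≤ ‖∑ i ∈ Finset.range M, b i • v i‖ := by
    intro j
    induction j with
    | zero => simp [hmix]
    | succ j ih =>
      by_cases hjM : j < M
      · -- write both sums splitting off index j
        set t : ℝ := if b j = 0 then 0 else c j / b j with hts
        have htb : c j = t * b j := by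
          by_cases hb : b j = 0
          · have : |c j| ≤ 0 := by rw [← abs_of_nonneg (le_refl (0:ℝ))]; simpa [hb] using h j
            have : c j = 0 := abs_nonpos_iff.1 this
            simp [hts, hb, this]
          · rw [hts, if_neg hb]; field_simp
        have ht1 : |t| ≤ 1 := by
          by_cases hb : b j = 0
          · simp [hts, hb]
          · rw [hts, if_neg hb, abs_div, div_le_one (abs_pos.2 hb)]; exact h j
        -- A := sum over range M minus j with mix j coefficients at i ≠ j
        have hmem : j ∈ Finset.range M := Finset.mem_range.2 hjM
        set A : V := ∑ i ∈ (Finset.range M).erase j, mix j i • v i with hA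
        have hsplit : ∀ θ : ℝ, ∑ i ∈ Finset.range M, (if i = j then θ * b j else mix j i) • v i
            = A + θ • (b j • v j) := by
          intro θ
          rw [← Finset.add_sum_erase _ _ hmem]
          rw [if_pos rfl, smul_smul]
          rw [add_comm, hA]
          congr 1
          refine Finset.sum_congr rfl ?_
          intro i hi
          rw [if_neg (Finset.ne_of_mem_erase hi)]
        have e1 : ∑ i ∈ Finset.range M, mix (j+1) i • v i
            = A + t • (b j • v j) := by
          rw [← hsplit t]
          refine Finset.sum_congr rfl ?_
          intro i _
          by_cases hij : i = j
          · subst hij; rw [if_pos rfl, hmix]; simp [← htb]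
          · rw [if_neg hij, hmix]
            simp only
            rcases lt_trichotomy i j with h'|h'|h'
            · rw [if_pos h', if_pos (by omega)]
            · exact absurd h' hij
            · rw [if_neg (by omega), if_neg (by omega)]
        have e2 : ∑ i ∈ Finset.range M, mix j i • v i = A + (1:ℝ) • (b j • v j) := by
          rw [← hsplit 1]
          refine Finset.sum_congr rfl ?_
          intro i _
          by_cases hij : i = j
          · subst hij; rw [if_pos rfl, one_mul, hmix]; simp
          · rw [if_neg hij]
        have e3 : ‖A - (b j • v j)‖ = ‖A + (1:ℝ) • (b j • v j)‖ := by
          -- use unconditionality flipping sign at j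
          have := hv (fun i => if i = j then b j else mix j i)
            (fun i => if i = j then -1 else 1) (fun i => by by_cases h : i = j <;> simp [h]) M
          have l1 : ∑ i ∈ Finset.range M,
              ((if i = j then (-1:ℝ) else 1) * (if i = j then b j else mix j i)) • v i
              = A + (-1:ℝ) • (b j • v j) := by
            rw [← hsplit (-1)]
            refine Finset.sum_congr rfl ?_
            intro i _
            by_cases hij : i = j <;> simp [hij]
          have l2 : ∑ i ∈ Finset.range M, (if i = j then b j else mix j i) • v i
              = A + (1:ℝ) • (b j • v j) := by
            rw [← hsplit 1]
            refine Finset.sum_congr rfl ?_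
            intro i _
            by_cases hij : i = j <;> simp [hij]
          rw [l1, l2] at this
          rw [← this]
          congr 1
          simp [sub_eq_add_neg]
        calc ‖∑ i ∈ Finset.range M, mix (j+1) i • v i‖
            = ‖A + t • (b j • v j)‖ := by rw [e1]
          _ ≤ max ‖A + (b j • v j)‖ ‖A - (b j • v j)‖ := norm_add_smul_le _ _ ht1
          _ = ‖A + (1:ℝ) • (b j • v j)‖ := by
              rw [e3]; simp [max_self]
          _ = ‖∑ i ∈ Finset.range M, mix j i • v i‖ := by rw [e2]
          _ ≤ _ := ih
      · have : ∑ i ∈ Finset.range M, mix (j+1) i • v i = ∑ i ∈ Finset.range M, mix j i • v i := by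
          refine Finset.sum_congr rfl ?_
          intro i hi
          have : i < M := Finset.mem_range.1 hi
          rw [hmix]
          simp only
          rw [if_pos (by omega), if_pos (by omega)]
        rw [this]; exact ih
  have := key M
  have hfin : ∀ i ∈ Finset.range M, mix M i • v i = c i • v i := by
    intro i hi
    rw [hmix]; simp only; rw [if_pos (Finset.mem_range.1 hi)]
  rwa [Finset.sum_congr rfl hfin] at this


/-- L4 : lattice estimate along a subsequence -/
lemma lattice_sub {V : Type*} [NormedAddCommGroup V] [NormedSpace ℝ V] {v : ℕ → V}
    (hv : IsOneUnconditional v) {m : ℕ → ℕ} (hm : StrictMono m)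
    {b c : ℕ → ℝ} (N : ℕ) (h : ∀ l, |c l| ≤ |b l|) :
    ‖∑ l ∈ Finset.range N, c l • v (m l)‖ ≤ ‖∑ l ∈ Finset.range N, b l • v (m l)‖ := by
  have hM : ∀ l < N, m l < m N + 1 := fun l hl => by
    have := hm.monotone (le_of_lt hl); omega
  rw [← extSeq_sum m N c v hM, ← extSeq_sum m N b v hM]
  exact lattice_core hv _ _ _ (extSeq_abs_le m hm N h)

/-- L5 : projection onto a subsequence of coordinates -/
lemma proj_sub {V : Type*} [NormedAddCommGroup V] [NormedSpace ℝ V] {v : ℕ → V}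
    (hv : IsOneUnconditional v) {m : ℕ → ℕ} (hm : StrictMono m)
    (b : ℕ → ℝ) (N M : ℕ) (hM : ∀ l < N, m l < M) :
    ‖∑ l ∈ Finset.range N, b (m l) • v (m l)‖ ≤ ‖∑ i ∈ Finset.range M, b i • v i‖ := by
  rw [← extSeq_sum m N (fun l => b (m l)) v hM]
  refine lattice_core hv _ _ _ ?_
  intro i
  by_cases hmem : ∃ l, l < N ∧ m l = i
  · obtain ⟨l, hl, rfl⟩ := hmem
    rw [extSeq_apply m hm N _ hl]
  · have : (Finset.range N).filter (fun l => m l = i) = ∅ := by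
      refine Finset.filter_eq_empty_iff.2 fun l hl hli => hmem ⟨l, Finset.mem_range.1 hl, hli⟩
    rw [extSeq, this]; simp

/-- single coordinate bound -/
lemma coord_bound {V : Type*} [NormedAddCommGroup V] [NormedSpace ℝ V] {v : ℕ → V}
    (hv : IsOneUnconditional v) (hvn : ∀ i, ‖v i‖ = 1) {m : ℕ → ℕ} (hm : StrictMono m)
    (b : ℕ → ℝ) (N : ℕ) {l : ℕ} (hl : l < N) :
    |b l| ≤ ‖∑ l' ∈ Finset.range N, b l' • v (m l')‖ := by
  have h := lattice_sub hv hm (c := fun l' => if l' = l then b l else 0) (b := b) N ?_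
  · have : ∑ l' ∈ Finset.range N, (if l' = l then b l else 0) • v (m l')
        = b l • v (m l) := by
      rw [Finset.sum_eq_single l]
      · simp
      · intro l' _ hne; rw [if_neg hne, zero_smul]
      · intro h; exact absurd (Finset.mem_range.2 hl) h
    rw [this, norm_smul, Real.norm_eq_abs, hvn, mul_one] at h
    exact h
  · intro l'
    by_cases h' : l' = l
    · subst h'; simp
    · simp [h']

/-- weak-star Cauchy subsequence extraction -/
lemma weak_cauchy_subseq {X : Type*} [NormedAddCommGroup X] [NormedSpace ℝ X]
    (hsep : TopologicalSpace.SeparableSpace (StrongDual ℝ X))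
    (g : ℕ → X) (hg : ∀ j, ‖g j‖ ≤ 1) :
    ∃ κ : ℕ → ℕ, StrictMono κ ∧
      ∀ φ : X →L[ℝ] ℝ, ∃ L : ℝ, Tendsto (fun j => φ (g (κ j))) atTop (𝓝 L) := by
  classical
  haveI : Nonempty (StrongDual ℝ X) := ⟨0⟩
  set ψ : ℕ → StrongDual ℝ X := TopologicalSpace.denseSeq (StrongDual ℝ X)
  have hψ : DenseRange ψ := TopologicalSpace.denseRange_denseSeq _
  -- the compact product space
  set K : Type := ∀ m : ℕ, Icc (-‖ψ m‖) (‖ψ m‖)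
  haveI : ∀ m : ℕ, CompactSpace (Icc (-‖ψ m‖) (‖ψ m‖)) :=
    fun m => isCompact_iff_compactSpace.mp isCompact_Icc
  have hb : ∀ m j, ψ m (g j) ∈ Icc (-‖ψ m‖) (‖ψ m‖) := by
    intro m j
    have := (ψ m).le_opNorm (g j)
    have h2 : |ψ m (g j)| ≤ ‖ψ m‖ := by
      rw [← Real.norm_eq_abs]
      calc ‖ψ m (g j)‖ ≤ ‖ψ m‖ * ‖g j‖ := (ψ m).le_opNorm (g j)
        _ ≤ ‖ψ m‖ * 1 := by
            apply mul_le_mul_of_nonneg_left (hg j) (norm_nonneg _)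
        _ = ‖ψ m‖ := mul_one _
    exact abs_le.1 h2
  set F : ℕ → K := fun j m => ⟨ψ m (g j), hb m j⟩
  obtain ⟨a, -, κ, hκ, hconv⟩ := (isCompact_univ (X := K)).tendsto_subseq (x := F)
    (fun n => mem_univ _)
  refine ⟨κ, hκ, ?_⟩
  have hcm : ∀ m : ℕ, Tendsto (fun j => ψ m (g (κ j))) atTop (𝓝 (a m : ℝ)) := by
    intro m
    have h1 : Tendsto (fun j => (F ∘ κ) j m) atTop (𝓝 (a m)) := (tendsto_pi_nhds.1 hconv) m
    exact ((continuous_subtype_val.tendsto _).comp h1)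
  intro φ
  -- Cauchy by density
  have hC : CauchySeq (fun j => φ (g (κ j))) := by
    rw [Metric.cauchySeq_iff]
    intro ε hε
    obtain ⟨m, hm⟩ : ∃ m, dist φ (ψ m) < ε/4 :=
      hψ.exists_dist_lt φ (show 0 < ε/4 by linarith)
    have hCm : CauchySeq (fun j => ψ m (g (κ j))) := (hcm m).cauchySeq
    rw [Metric.cauchySeq_iff] at hCm
    obtain ⟨N, hN⟩ := hCm (ε/4) (by linarith)
    refine ⟨N, fun p hp q hq => ?_⟩
    have e1 : ∀ r, |φ (g (κ r)) - ψ m (g (κ r))| ≤ ε/4 := by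
      intro r
      have : ‖(φ - ψ m) (g (κ r))‖ ≤ ‖φ - ψ m‖ * ‖g (κ r)‖ := (φ - ψ m).le_opNorm _
      have h2 : ‖φ - ψ m‖ < ε/4 := by rwa [← dist_eq_norm]
      have h3 : ‖(φ - ψ m) (g (κ r))‖ ≤ ε/4 := by
        calc ‖(φ - ψ m) (g (κ r))‖ ≤ ‖φ - ψ m‖ * ‖g (κ r)‖ := this
          _ ≤ (ε/4) * 1 := by
              apply mul_le_mul (le_of_lt h2) (hg _) (norm_nonneg _) (by linarith)
          _ = ε/4 := mul_one _
      simpa [Real.norm_eq_abs] using h3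
    have := hN p hp q hq
    rw [Real.dist_eq] at this ⊢
    have := e1 p; have := e1 q
    calc |φ (g (κ p)) - φ (g (κ q))|
        ≤ |φ (g (κ p)) - ψ m (g (κ p))| + |ψ m (g (κ p)) - ψ m (g (κ q))|
          + |ψ m (g (κ q)) - φ (g (κ q))| := by
          have := abs_sub_le (φ (g (κ p))) (ψ m (g (κ p))) (φ (g (κ q)))
          have := abs_sub_le (ψ m (g (κ p))) (ψ m (g (κ q))) (φ (g (κ q)))
          linarith [abs_sub_le (φ (g (κ p))) (ψ m (g (κ p))) (φ (g (κ q))),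
            abs_sub_le (ψ m (g (κ p))) (ψ m (g (κ q))) (φ (g (κ q)))]
      _ < ε := by
          have h1 := e1 p
          have h2 := e1 q
          have h3 := hN p hp q hq
          rw [Real.dist_eq] at h3
          have : |ψ m (g (κ q)) - φ (g (κ q))| = |φ (g (κ q)) - ψ m (g (κ q))| := abs_sub_comm _ _
          linarith
    done
  exact cauchySeq_tendsto_of_complete hC


lemma sum_halves (N : ℕ) : ∑ i ∈ Finset.range N, (1/2 : ℝ)^i ≤ 2 := by
  induction N with
  | zero => simp
  | succ n ih =>
    have key : ∀ m : ℕ, ∑ i ∈ Finset.range m, (1/2:ℝ)^i = 2 - 2 * (1/2:ℝ)^m := by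
      intro m
      induction m with
      | zero => simp
      | succ k ihk =>
        rw [Finset.sum_range_succ, ihk]
        ring
    rw [key]
    have : (0:ℝ) < (1/2:ℝ)^(n+1) := by positivity
    linarith


theorem construction {X : Type*} [NormedAddCommGroup X] [NormedSpace ℝ X]
    (hsep : TopologicalSpace.SeparableSpace (StrongDual ℝ X))
    (f : Finset ℕ → (X →L[ℝ] ℝ))
    (h1 : ∀ s : Finset ℕ, Even s.card → ‖f s‖ = 1)
    (h2 : ∀ s : Finset ℕ, Odd s.card → ∀ u : X,
      Tendsto (fun k => f (insert k s) u) atTop (𝓝 0)) :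
    ∃ (G : Finset ℕ → Finset ℕ) (y d : Finset ℕ → X),
      G ∅ = ∅ ∧
      (∀ s, Even s.card → ‖y s‖ = 1) ∧
      (∀ s, (G s).card = s.card) ∧
      (∀ (s' : Finset ℕ) (k : ℕ), (∀ i ∈ s', i < k) →
        ∃ e : ℕ, (∀ i ∈ G s', i < e) ∧ k ≤ e ∧ G (insert k s') = insert e (G s')) ∧
      (∀ (s' : Finset ℕ) (k : ℕ), (∀ i ∈ s', i < k) → Odd s'.card →
        1/2 ≤ ‖d (insert k s')‖ ∧ ‖d (insert k s')‖ ≤ 2 ∧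
        y (insert k s') = ‖d (insert k s')‖⁻¹ • d (insert k s') ∧
        1/2 ≤ f (G (insert k s')) (d (insert k s')) ∧
        (∀ t ⊆ G s', Even t.card → |f t (d (insert k s'))| ≤ epsF k) ∧
        (∀ u, u ⊂ insert k s' → |f (G (insert k s')) (y u)| ≤ epsF k)) ∧
      (∀ s' : Finset ℕ, Odd s'.card → ∀ φ : X →L[ℝ] ℝ,
        Tendsto (fun k => φ (d (insert k s'))) atTop (𝓝 0)) := by
  classical
  -- norming vectors
  have hxex : ∀ s : Finset ℕ, ∃ u : X, ‖u‖ ≤ 1 ∧ (Even s.card → ‖u‖ = 1 ∧ 3/4 ≤ f s u) := by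
    intro s
    by_cases hev : Even s.card
    · have hns : ‖f s‖ = 1 := h1 s hev
      -- find u in unit ball with f s u > 3/4
      have : ∃ u : X, ‖u‖ ≤ 1 ∧ 3/4 < f s u := by
        by_contra hcon
        push_neg at hcon
        have hb : ∀ u : X, ‖u‖ ≤ 1 → |f s u| ≤ 3/4 := by
          intro u hu
          rw [abs_le]
          constructor
          · have := hcon (-u) (by rwa [norm_neg])
            rw [map_neg] at this
            linarith
          · exact hcon u hu
        have : ‖f s‖ ≤ 3/4 := by
          refine ContinuousLinearMap.opNorm_le_bound _ (by norm_num) ?_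
          intro u
          by_cases hu : u = 0
          · simp [hu]
          · have hnu : 0 < ‖u‖ := norm_pos_iff.2 hu
            have := hb (‖u‖⁻¹ • u) (by
              rw [norm_smul, Real.norm_eq_abs, abs_inv, abs_of_pos hnu]
              rw [inv_mul_cancel₀ (ne_of_gt hnu)])
            rw [map_smul] at this
            rw [Real.norm_eq_abs]
            have h4 : |‖u‖⁻¹ * f s u| ≤ 3/4 := by simpa using this
            rw [abs_mul, abs_inv, abs_of_pos hnu] at h4
            calc |f s u| = ‖u‖ * (‖u‖⁻¹ * |f s u|) := by
                  field_simp
              _ ≤ ‖u‖ * (3/4) := by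
                  apply mul_le_mul_of_nonneg_left h4 (le_of_lt hnu)
              _ = 3/4 * ‖u‖ := by ring
        rw [hns] at this; norm_num at this
      obtain ⟨u, hu1, hu2⟩ := this
      have hu0 : u ≠ 0 := by
        intro h; rw [h] at hu2; simp at hu2; linarith
      have hnu : 0 < ‖u‖ := norm_pos_iff.2 hu0
      refine ⟨‖u‖⁻¹ • u, ?_, fun _ => ⟨?_, ?_⟩⟩
      · rw [norm_smul, Real.norm_eq_abs, abs_inv, abs_of_pos hnu, inv_mul_cancel₀ (ne_of_gt hnu)]
      · rw [norm_smul, Real.norm_eq_abs, abs_inv, abs_of_pos hnu, inv_mul_cancel₀ (ne_of_gt hnu)]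
      · rw [map_smul]
        have h5 : (1:ℝ) ≤ ‖u‖⁻¹ := by
          rw [le_inv_comm₀ (by norm_num) hnu]; simpa using hu1
        have hfu : (0:ℝ) < f s u := by linarith
        calc (3/4 : ℝ) ≤ f s u := le_of_lt hu2
          _ = 1 * f s u := (one_mul _).symm
          _ ≤ ‖u‖⁻¹ * f s u := by
              apply mul_le_mul_of_nonneg_right h5 (le_of_lt hfu)
          _ = ‖u‖⁻¹ • f s u := rfl
    · exact ⟨0, by simp, fun h => absurd h hev⟩
  choose x hx1 hx2 using hxex
  -- subsequences
  have hκex : ∀ T : Finset ℕ, ∃ κ : ℕ → ℕ, StrictMono κ ∧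
      ∀ φ : X →L[ℝ] ℝ, ∃ L : ℝ,
        Tendsto (fun j => φ (x (insert (T.sup id + 1 + κ j) T))) atTop (𝓝 L) := by
    intro T
    exact weak_cauchy_subseq hsep (fun j => x (insert (T.sup id + 1 + j) T)) (fun j => hx1 _)
  choose κf hκ1 hκ2 using hκex
  set el : Finset ℕ → ℕ → ℕ := fun T m => T.sup id + 1 + κf T m with hel
  set Xv : Finset ℕ → ℕ → X := fun T m => x (insert (el T m) T) with hXv
  have hel_notmem : ∀ T m, el T m ∉ T := by
    intro T m hmem
    have := Finset.le_sup (f := id) hmem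
    simp only [id, hel] at this
    omega
  have hel_gt : ∀ T m, ∀ i ∈ T, i < el T m := by
    intro T m i hi
    have := Finset.le_sup (f := id) hi
    simp only [id] at this
    simp only [hel]
    omega
  have hel_ge : ∀ T m, m ≤ el T m := by
    intro T m
    have := (hκ1 T).le_apply (x := m)
    simp only [hel]
    omega
  have hel_mono : ∀ T, StrictMono (el T) := by
    intro T a b hab
    have := hκ1 T hab
    simp only [hel]
    omega
  have hXv_even : ∀ T, Odd T.card → ∀ m, Even ((insert (el T m) T).card) := by
    intro T hT m
    rw [Finset.card_insert_of_notMem (hel_notmem T m)]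
    exact hT.add_one
  have hXv_norm : ∀ T, Odd T.card → ∀ m, ‖Xv T m‖ = 1 := by
    intro T hT m
    exact (hx2 _ (hXv_even T hT m)).1
  have hXv_f : ∀ T, Odd T.card → ∀ m, 3/4 ≤ f (insert (el T m) T) (Xv T m) := by
    intro T hT m
    exact (hx2 _ (hXv_even T hT m)).2
  -- limits of f t along the subsequence
  have hLex : ∀ T : Finset ℕ, ∀ t : Finset ℕ, ∃ L : ℝ,
      Tendsto (fun j => f t (Xv T j)) atTop (𝓝 L) := by
    intro T t
    exact hκ2 T (f t)
  choose Lf hLf using hLex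
  -- The pair existence lemma
  have EP : ∀ (T : Finset ℕ), Odd T.card → ∀ (k : ℕ) (dom : Finset (Finset ℕ)) (Wf : Finset ℕ → X),
      ∃ p q : ℕ,
        k ≤ p ∧ k ≤ q ∧
        (1/2 ≤ ‖Xv T p - Xv T q‖) ∧ (‖Xv T p - Xv T q‖ ≤ 2) ∧
        (1/2 ≤ f (insert (el T p) T) (Xv T p - Xv T q)) ∧
        (∀ t ⊆ T, Even t.card → |f t (Xv T p - Xv T q)| ≤ epsF k) ∧
        (∀ u ∈ dom, |f (insert (el T p) T) (Wf u)| ≤ epsF k) := by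
    intro T hT k dom Wf
    have hpos := epsF_pos k
    -- choose q
    have hq_ev : ∀ᶠ m in atTop, (∀ t ∈ T.powerset, |f t (Xv T m) - Lf T t| ≤ epsF k / 2) ∧ k ≤ m := by
      refine Filter.Eventually.and ?_ (eventually_ge_atTop k)
      rw [Finset.eventually_all]
      intro t _
      have := (hLf T t)
      have := Metric.tendsto_atTop.1 this (epsF k / 2) (by linarith)
      obtain ⟨N, hN⟩ := this
      refine eventually_atTop.2 ⟨N, fun m hm => ?_⟩
      have := hN m hm
      rw [Real.dist_eq] at this
      linarith
    obtain ⟨q, hq1, hq2⟩ := hq_ev.exists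
    -- choose p
    have hp_ev : ∀ᶠ m in atTop,
        ((∀ t ∈ T.powerset, |f t (Xv T m) - Lf T t| ≤ epsF k / 2) ∧ k ≤ m) ∧
        |f (insert (el T m) T) (Xv T q)| ≤ 1/4 ∧
        (∀ u ∈ dom, |f (insert (el T m) T) (Wf u)| ≤ epsF k) := by
      refine Filter.Eventually.and hq_ev (Filter.Eventually.and ?_ ?_)
      · have htend : Tendsto (fun j => f (insert j T) (Xv T q)) atTop (𝓝 0) := h2 T hT (Xv T q)
        have hel_tend : Tendsto (el T) atTop atTop := (hel_mono T).tendsto_atTop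
        have := (htend.comp hel_tend)
        have := Metric.tendsto_atTop.1 this (1/4) (by norm_num)
        obtain ⟨N, hN⟩ := this
        refine eventually_atTop.2 ⟨N, fun m hm => ?_⟩
        have := hN m hm
        rw [Real.dist_eq] at this
        simp only [Function.comp] at this
        rw [sub_zero] at this
        linarith
      · rw [Finset.eventually_all]
        intro u _
        have htend : Tendsto (fun j => f (insert j T) (Wf u)) atTop (𝓝 0) := h2 T hT (Wf u)
        have := (htend.comp ((hel_mono T).tendsto_atTop))
        have := Metric.tendsto_atTop.1 this (epsF k) hpos
        obtain ⟨N, hN⟩ := this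
        refine eventually_atTop.2 ⟨N, fun m hm => ?_⟩
        have := hN m hm
        rw [Real.dist_eq] at this
        simp only [Function.comp] at this
        rw [sub_zero] at this
        linarith
    obtain ⟨p, ⟨hp1, hp2⟩, hp3, hp4⟩ := hp_ev.exists
    have hfp : 3/4 ≤ f (insert (el T p) T) (Xv T p) := hXv_f T hT p
    have hkey : 1/2 ≤ f (insert (el T p) T) (Xv T p - Xv T q) := by
      rw [map_sub]
      have := abs_le.1 hp3
      linarith [this.2]
    have hnorm_le : ‖Xv T p - Xv T q‖ ≤ 2 := by
      calc ‖Xv T p - Xv T q‖ ≤ ‖Xv T p‖ + ‖Xv T q‖ := norm_sub_le _ _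
        _ = 2 := by rw [hXv_norm T hT p, hXv_norm T hT q]; norm_num
    have hnorm_ge : 1/2 ≤ ‖Xv T p - Xv T q‖ := by
      have hfn : ‖f (insert (el T p) T)‖ = 1 := h1 _ (hXv_even T hT p)
      have := (f (insert (el T p) T)).le_opNorm (Xv T p - Xv T q)
      rw [hfn, one_mul] at this
      have h6 : f (insert (el T p) T) (Xv T p - Xv T q)
          ≤ ‖f (insert (el T p) T) (Xv T p - Xv T q)‖ := le_abs_self _
      linarith
    refine ⟨p, q, hp2, hq2, hnorm_ge, hnorm_le, hkey, ?_, hp4⟩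
    intro t ht _
    have h7 := hp1 t (Finset.mem_powerset.2 ht)
    have h8 := hq1 t (Finset.mem_powerset.2 ht)
    rw [map_sub]
    have := abs_sub_le (f t (Xv T p)) (Lf T t) (f t (Xv T q))
    rw [abs_sub_comm (Lf T t) (f t (Xv T q))] at this
    linarith
  -- ===== recursion =====
  set junk : X := x ∅ with hjunk
  have stepEx : ∀ (s : Finset ℕ) (T : Finset ℕ) (W : Finset ℕ → X),
      ∃ out : Finset ℕ × X × X,
        ∀ hs : s.Nonempty,
          (∃ e : ℕ, (∀ i ∈ T, i < e) ∧ s.max' hs ≤ e ∧ out.1 = insert e T) ∧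
          (Odd T.card ∧ Even s.card →
            1/2 ≤ ‖out.2.2‖ ∧ ‖out.2.2‖ ≤ 2 ∧ out.2.1 = ‖out.2.2‖⁻¹ • out.2.2 ∧
            1/2 ≤ f out.1 out.2.2 ∧
            (∀ t ⊆ T, Even t.card → |f t out.2.2| ≤ epsF (s.max' hs)) ∧
            (∀ u ∈ s.powerset.erase s, |f out.1 (W u)| ≤ epsF (s.max' hs)) ∧
            (∃ p q : ℕ, s.max' hs ≤ p ∧ s.max' hs ≤ q ∧ out.2.2 = Xv T p - Xv T q)) := by
    intro s T W
    by_cases hs0 : s.Nonempty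
    · set M := s.max' hs0 with hM
      by_cases hgate : Odd T.card ∧ Even s.card
      · obtain ⟨p, q, hp, hq, hd1, hd2, hd3, hd4, hd5⟩ :=
          EP T hgate.1 M (s.powerset.erase s) W
        refine ⟨(insert (el T p) T, ‖Xv T p - Xv T q‖⁻¹ • (Xv T p - Xv T q), Xv T p - Xv T q),
          fun hs => ?_⟩
        have hMM : s.max' hs = M := rfl
        constructor
        · exact ⟨el T p, hel_gt T p, by rw [hMM]; exact le_trans hp (hel_ge T p), rfl⟩
        · intro _
          refine ⟨hd1, hd2, rfl, hd3, ?_, ?_, p, q, ?_, ?_, rfl⟩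
          · intro t ht hev; rw [hMM]; exact hd4 t ht hev
          · intro u hu; rw [hMM]; exact hd5 u hu
          · rw [hMM]; exact hp
          · rw [hMM]; exact hq
      · refine ⟨(insert (max (T.sup id + 1) M) T, junk, junk), fun hs => ?_⟩
        have hMM : s.max' hs = M := rfl
        constructor
        · refine ⟨max (T.sup id + 1) M, ?_, by rw [hMM]; exact le_max_right _ _, rfl⟩
          intro i hi
          have := Finset.le_sup (f := id) hi
          simp only [id] at this
          have : i ≤ T.sup id := this
          have h2 : T.sup id + 1 ≤ max (T.sup id + 1) M := le_max_left _ _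
          omega
        · intro hg; exact absurd hg hgate
    · exact ⟨(∅, junk, junk), fun hs => absurd hs hs0⟩
  set DD : Finset ℕ → Finset ℕ × X × X := Finset.strongInduction
    (fun s ih => if hs : s.Nonempty then
       Classical.choose (stepEx s (ih (s.erase (s.max' hs))
            (Finset.erase_ssubset (s.max'_mem hs))).1
          (fun u => if h : u ⊂ s then (ih u h).2.1 else junk))
     else (∅, junk, junk)) with hDD
  set G : Finset ℕ → Finset ℕ := fun s => (DD s).1 with hG
  set yy : Finset ℕ → X := fun s => (DD s).2.1 with hyy
  set dd : Finset ℕ → X := fun s => (DD s).2.2 with hdd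
  have hDDeq : ∀ s : Finset ℕ, DD s = if hs : s.Nonempty then
      Classical.choose (stepEx s (G (s.erase (s.max' hs)))
        (fun u => if _ : u ⊂ s then yy u else junk)) else (∅, junk, junk) := by
    intro s
    rw [hDD, Finset.strongInduction_eq]
  have hGempty : G ∅ = ∅ := by
    rw [hG]
    simp only
    rw [hDDeq ∅, dif_neg (by simp)]
  have hnode : ∀ (s : Finset ℕ) (hs : s.Nonempty),
      (∃ e : ℕ, (∀ i ∈ G (s.erase (s.max' hs)), i < e) ∧ s.max' hs ≤ e ∧
        G s = insert e (G (s.erase (s.max' hs)))) ∧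
      (Odd (G (s.erase (s.max' hs))).card ∧ Even s.card →
        1/2 ≤ ‖dd s‖ ∧ ‖dd s‖ ≤ 2 ∧ yy s = ‖dd s‖⁻¹ • dd s ∧
        1/2 ≤ f (G s) (dd s) ∧
        (∀ t ⊆ G (s.erase (s.max' hs)), Even t.card → |f t (dd s)| ≤ epsF (s.max' hs)) ∧
        (∀ u, u ⊂ s → |f (G s) (yy u)| ≤ epsF (s.max' hs)) ∧
        (∃ p q : ℕ, s.max' hs ≤ p ∧ s.max' hs ≤ q ∧
          dd s = Xv (G (s.erase (s.max' hs))) p - Xv (G (s.erase (s.max' hs))) q)) := by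
    intro s hs
    have hspec := Classical.choose_spec (stepEx s (G (s.erase (s.max' hs)))
      (fun u => if _ : u ⊂ s then yy u else junk)) hs
    have heq : DD s = Classical.choose (stepEx s (G (s.erase (s.max' hs)))
        (fun u => if _ : u ⊂ s then yy u else junk)) := by
      rw [hDDeq s, dif_pos hs]
    rw [← heq] at hspec
    obtain ⟨h_e, h_gate⟩ := hspec
    refine ⟨h_e, fun hg => ?_⟩
    obtain ⟨a1, a2, a3, a4, a5, a6, a7⟩ := h_gate hg
    refine ⟨a1, a2, a3, a4, a5, ?_, a7⟩
    intro u hu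
    have humem : u ∈ s.powerset.erase s :=
      Finset.mem_erase.2 ⟨hu.ne, Finset.mem_powerset.2 hu.subset⟩
    have := a6 u humem
    rwa [dif_pos hu] at this
  have hcard : ∀ s : Finset ℕ, (G s).card = s.card := by
    intro s
    induction s using Finset.strongInduction with
    | _ s ih =>
      by_cases hs : s.Nonempty
      · obtain ⟨e, he1, he2, he3⟩ := (hnode s hs).1
        have hkO := ih (s.erase (s.max' hs)) (Finset.erase_ssubset (s.max'_mem hs))
        have hnm : e ∉ G (s.erase (s.max' hs)) := fun hmem => lt_irrefl e (he1 e hmem)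
        rw [he3, Finset.card_insert_of_notMem hnm, hkO,
          Finset.card_erase_of_mem (s.max'_mem hs)]
        have : 1 ≤ s.card := Finset.card_pos.2 hs
        omega
      · have hse : s = ∅ := Finset.not_nonempty_iff_eq_empty.1 hs
        rw [hse, hGempty]
  -- helper facts about insert k s' with k above s'
  have hins : ∀ (s' : Finset ℕ) (k : ℕ), (∀ i ∈ s', i < k) →
      k ∉ s' ∧ (insert k s').Nonempty ∧
      ∀ hs : (insert k s').Nonempty, (insert k s').max' hs = k := by
    intro s' k h
    have hkn : k ∉ s' := fun hmem => lt_irrefl k (h k hmem)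
    refine ⟨hkn, ⟨k, Finset.mem_insert_self _ _⟩, fun hs => ?_⟩
    refine le_antisymm ?_ (Finset.le_max' _ k (Finset.mem_insert_self _ _))
    refine Finset.max'_le _ _ _ ?_
    intro y hy
    rcases Finset.mem_insert.1 hy with rfl | hy'
    · exact le_refl _
    · exact le_of_lt (h y hy')
  refine ⟨G, yy, dd, hGempty, ?_, hcard, ?_, ?_, ?_⟩
  · -- normalization
    intro s hev
    by_cases hs : s.Nonempty
    · have hodd : Odd ((G (s.erase (s.max' hs))).card) := by
        rw [hcard, Finset.card_erase_of_mem (s.max'_mem hs)]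
        have h1c : 1 ≤ s.card := Finset.card_pos.2 hs
        rcases hev with ⟨c, hc⟩
        refine ⟨c - 1, by omega⟩
      obtain ⟨a1, a2, a3, -⟩ := (hnode s hs).2 ⟨hodd, hev⟩
      rw [a3, norm_smul, Real.norm_eq_abs, abs_inv, abs_of_pos (by linarith),
        inv_mul_cancel₀ (by linarith)]
    · have hse : s = ∅ := Finset.not_nonempty_iff_eq_empty.1 hs
      rw [hse]
      show ‖(DD ∅).2.1‖ = 1
      rw [hDDeq ∅, dif_neg (by simp)]
      exact (hx2 ∅ (by simp)).1
  · -- C2 : shape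
    intro s' k h
    obtain ⟨hkn, hne, hmax⟩ := hins s' k h
    obtain ⟨e, he1, he2, he3⟩ := (hnode (insert k s') hne).1
    rw [hmax hne, Finset.erase_insert hkn] at he1
    rw [hmax hne] at he2
    rw [hmax hne, Finset.erase_insert hkn] at he3
    exact ⟨e, he1, he2, he3⟩
  · -- C4 : main node estimates
    intro s' k h hodd'
    obtain ⟨hkn, hne, hmax⟩ := hins s' k h
    have hgate : Odd ((G ((insert k s').erase ((insert k s').max' hne))).card)
        ∧ Even (insert k s').card := by
      rw [hmax hne, Finset.erase_insert hkn, hcard,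
        Finset.card_insert_of_notMem hkn]
      exact ⟨hodd', hodd'.add_one⟩
    obtain ⟨a1, a2, a3, a4, a5, a6, -⟩ := (hnode (insert k s') hne).2 hgate
    rw [hmax hne, Finset.erase_insert hkn] at a5
    rw [hmax hne] at a6
    exact ⟨a1, a2, a3, a4, a5, a6⟩
  · -- C5 : weak null nodes
    intro s' hodd' φ
    rw [Metric.tendsto_atTop]
    intro δ hδ
    obtain ⟨L, hL⟩ := hκ2 (G s') φ
    have hLX : Tendsto (fun j => φ (Xv (G s') j)) atTop (𝓝 L) := hL
    have hcauchy := hLX.cauchySeq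
    rw [Metric.cauchySeq_iff] at hcauchy
    obtain ⟨K, hK⟩ := hcauchy δ hδ
    refine ⟨max K (s'.sup id + 1), fun k hk => ?_⟩
    have hbig : ∀ i ∈ s', i < k := by
      intro i hi
      have := Finset.le_sup (f := id) hi
      simp only [id] at this
      have h2 : s'.sup id + 1 ≤ k := le_trans (le_max_right _ _) hk
      omega
    obtain ⟨hkn, hne, hmax⟩ := hins s' k hbig
    have hgate : Odd ((G ((insert k s').erase ((insert k s').max' hne))).card)
        ∧ Even (insert k s').card := by
      rw [hmax hne, Finset.erase_insert hkn, hcard,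
        Finset.card_insert_of_notMem hkn]
      exact ⟨hodd', hodd'.add_one⟩
    obtain ⟨-, -, -, -, -, -, p, q, hp, hq, hpq⟩ := (hnode (insert k s') hne).2 hgate
    rw [hmax hne] at hp hq
    rw [hmax hne, Finset.erase_insert hkn] at hpq
    have hKk : K ≤ k := le_trans (le_max_left _ _) hk
    have := hK p (le_trans hKk hp) q (le_trans hKk hq)
    rw [hpq, map_sub]
    rw [Real.dist_eq, sub_zero]
    rw [Real.dist_eq] at this
    exact le_of_eq rfl |>.trans_lt this


end OSZAux

set_option maxHeartbeats 2000000

open OSZAux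

/-- Lemma 2.7: if `X` has separable dual and satisfies subsequential `V` upper tree
estimates, then `X^*` satisfies subsequential `V^*` lower `w^*` tree estimates. -/
theorem dual_lower_wstar_tree_estimates
    {X : Type*} [NormedAddCommGroup X] [NormedSpace ℝ X] [CompleteSpace X]
    {V : Type*} [NormedAddCommGroup V] [NormedSpace ℝ V] [CompleteSpace V]
    {W : Type*} [NormedAddCommGroup W] [NormedSpace ℝ W] [CompleteSpace W]
    (hXsep : TopologicalSpace.SeparableSpace (StrongDual ℝ X))
    (v : ℕ → V) (w : ℕ → W)
    (hvnorm : IsNormalized v) (hvuncond : IsOneUnconditional v)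
    (hvbasic : IsBasicSeq v) (hvright : RightDominant v)
    (hw : IsBiorthDual v w)
    (hX : UpperTree v X) :
    ∃ C : ℝ, 1 ≤ C ∧ LowerWStarTreeC w X C := by
  classical
  obtain ⟨CX, hCX1, hCX⟩ := hX
  obtain ⟨D, hD1, hD⟩ := hvright
  refine ⟨8 * CX * D, by nlinarith, ?_⟩
  intro f hf
  obtain ⟨h1, h2⟩ := hf
  obtain ⟨G, y, d, hGe, hynorm, hcard, hshape, hmain, hwknull⟩ :=
    construction hXsep f h1 h2
  -- the difference tree is weakly null
  have htree : WNEvenTree y := by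
    refine ⟨hynorm, ?_⟩
    intro s hodd φ
    have hd0 := hwknull s hodd φ
    rw [Metric.tendsto_atTop] at hd0 ⊢
    intro δ hδ
    obtain ⟨K, hK⟩ := hd0 (δ/4) (by linarith)
    refine ⟨max K (s.sup id + 1), fun k hk => ?_⟩
    have hbig : ∀ i ∈ s, i < k := by
      intro i hi
      have := Finset.le_sup (f := id) hi
      simp only [id] at this
      have h2' : s.sup id + 1 ≤ k := le_trans (le_max_right _ _) hk
      omega
    obtain ⟨b1, b2, b3, -, -, -⟩ := hmain s k hbig hodd
    have hKk := hK k (le_trans (le_max_left _ _) hk)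
    rw [Real.dist_eq, sub_zero] at hKk ⊢
    rw [b3, map_smul]
    have hd2 : ‖d (insert k s)‖⁻¹ ≤ 2 := by
      rw [inv_le_comm₀ (by linarith) (by norm_num)]
      linarith
    have hd3 : (0:ℝ) ≤ ‖d (insert k s)‖⁻¹ := by positivity
    rw [smul_eq_mul, abs_mul, abs_of_nonneg hd3]
    calc ‖d (insert k s)‖⁻¹ * |φ (d (insert k s))| ≤ 2 * (δ/4) := by
          apply mul_le_mul hd2 (le_of_lt hKk) (abs_nonneg _) (by norm_num)
      _ < δ := by linarith
  obtain ⟨nt, hntmono, hntdom⟩ := hCX y htree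
  -- branch prefixes
  set sA : ℕ → Finset ℕ := fun i => Finset.image nt (Finset.range i) with hsA
  have hsAsucc : ∀ i, sA (i+1) = insert (nt i) (sA i) := by
    intro i
    rw [hsA]
    simp only
    rw [Finset.range_add_one, Finset.image_insert]
  have hsAlt : ∀ i, ∀ j ∈ sA i, j < nt i := by
    intro i j hj
    rw [hsA] at hj
    simp only [Finset.mem_image, Finset.mem_range] at hj
    obtain ⟨l, hl, rfl⟩ := hj
    exact hntmono hl
  have hsAcard : ∀ i, (sA i).card = i := by
    intro i
    rw [hsA]
    simp only
    rw [Finset.card_image_of_injective _ hntmono.injective, Finset.card_range]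
  have hnex : ∀ i, ∃ e, (∀ j ∈ G (sA i), j < e) ∧ nt i ≤ e ∧
      G (sA (i+1)) = insert e (G (sA i)) := by
    intro i
    rw [hsAsucc i]
    exact hshape (sA i) (nt i) (hsAlt i)
  choose n hn1 hn2 hn3 using hnex
  have hnmem : ∀ i, n i ∈ G (sA (i+1)) := by
    intro i
    rw [hn3 i]
    exact Finset.mem_insert_self _ _
  have hnmono : StrictMono n := by
    apply strictMono_nat_of_lt_succ
    intro i
    exact hn1 (i+1) (n i) (hnmem i)
  have hGsA : ∀ i, G (sA i) = Finset.image n (Finset.range i) := by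
    intro i
    induction i with
    | zero =>
      have : sA 0 = ∅ := by rw [hsA]; simp
      rw [this, hGe]; simp
    | succ i ih =>
      rw [hn3 i, ih, Finset.range_add_one, Finset.image_insert]
  have hbranchf : ∀ l, branchSet n l = G (sA (2*l+2)) := by
    intro l
    rw [branchSet, hGsA]
  have hbranchy : ∀ l, branchSet nt l = sA (2*l+2) := by
    intro l
    rw [branchSet, hsA]
  -- node data along the branch
  have hprefix : ∀ l, sA (2*l+2) = insert (nt (2*l+1)) (sA (2*l+1)) := fun l => hsAsucc (2*l+1)
  have hsAodd : ∀ l, Odd ((sA (2*l+1)).card) := by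
    intro l
    rw [hsAcard]
    exact ⟨l, by ring⟩
  have hnodes : ∀ l,
      1/2 ≤ ‖d (sA (2*l+2))‖ ∧ ‖d (sA (2*l+2))‖ ≤ 2 ∧
      y (sA (2*l+2)) = ‖d (sA (2*l+2))‖⁻¹ • d (sA (2*l+2)) ∧
      1/2 ≤ f (G (sA (2*l+2))) (d (sA (2*l+2))) ∧
      (∀ t ⊆ G (sA (2*l+1)), Even t.card → |f t (d (sA (2*l+2)))| ≤ epsF (nt (2*l+1))) ∧
      (∀ u, u ⊂ sA (2*l+2) → |f (G (sA (2*l+2))) (y u)| ≤ epsF (nt (2*l+1))) := by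
    intro l
    have := hmain (sA (2*l+1)) (nt (2*l+1)) (hsAlt (2*l+1)) (hsAodd l)
    rw [← hprefix l] at this
    exact this
  set Dl : ℕ → X := fun l => d (sA (2*l+2)) with hDl
  set Fl : ℕ → (X →L[ℝ] ℝ) := fun l => f (G (sA (2*l+2))) with hFl
  -- cross estimates
  have hpow : ∀ (m l j : ℕ), l + j ≤ m → (1/2:ℝ)^m ≤ (1/2)^l * (1/2)^j := by
    intro m l j h
    rw [← pow_add]
    exact pow_le_pow_of_le_one (by norm_num) (by norm_num) h
  have hepsF : ∀ k : ℕ, epsF k = (1/2:ℝ)^(2*k)/100 := fun k => rfl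
  have hDlY : ∀ j, Dl j = ‖Dl j‖ • y (sA (2*j+2)) := by
    intro j
    obtain ⟨c1, -, c3, -⟩ := hnodes j
    rw [c3, smul_smul, mul_inv_cancel₀ (by rw [hDl]; simp only; linarith), one_smul]
  have hcross : ∀ l j, l ≠ j → |Fl l (Dl j)| ≤ (1/50) * ((1/2:ℝ)^l * (1/2:ℝ)^j) := by
    intro l j hne
    rcases lt_or_gt_of_ne hne with hlj | hjl
    · -- l < j : use the t-clause at node j
      obtain ⟨-, -, -, -, c5, -⟩ := hnodes j
      have hsub : G (sA (2*l+2)) ⊆ G (sA (2*j+1)) := by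
        rw [hGsA, hGsA]
        exact Finset.image_subset_image (Finset.range_subset_range.2 (by omega))
      have hev : Even ((G (sA (2*l+2))).card) := by
        rw [hcard, hsAcard]
        exact ⟨l+1, by ring⟩
      have := c5 _ hsub hev
      refine le_trans this (le_trans (epsF_anti (hntmono.le_apply (x := 2*j+1))) ?_)
      rw [hepsF]
      have h9 := hpow (2*(2*j+1)) l j (by omega)
      have hp : (0:ℝ) ≤ (1/2:ℝ)^l*(1/2:ℝ)^j := by positivity
      linarith
    · -- j < l : use the u-clause at node l
      obtain ⟨-, -, -, -, -, c6⟩ := hnodes l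
      have hssub : sA (2*j+2) ⊂ sA (2*l+2) := by
        rw [Finset.ssubset_iff_subset_ne]
        constructor
        · rw [hsA]
          exact Finset.image_subset_image (Finset.range_subset_range.2 (by omega))
        · intro heq
          have := hsAcard (2*j+2)
          rw [heq, hsAcard] at this
          omega
      have hYb := c6 _ hssub
      have hDlj2 : ‖Dl j‖ ≤ 2 := (hnodes j).2.1
      rw [hDlY j, map_smul, smul_eq_mul, abs_mul, abs_of_nonneg (norm_nonneg _)]
      have h8 : ‖Dl j‖ * |Fl l (y (sA (2*j+2)))| ≤ 2 * epsF (nt (2*l+1)) := by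
        apply mul_le_mul hDlj2 hYb (abs_nonneg _) (by norm_num)
      refine le_trans h8 ?_
      have h10 : epsF (nt (2*l+1)) ≤ epsF (2*l+1) := epsF_anti (hntmono.le_apply (x := 2*l+1))
      simp only [hepsF] at h10 ⊢
      have h9 := hpow (2*(2*l+1)) l j (by omega)
      have hp : (0:ℝ) ≤ (1/2:ℝ)^l*(1/2:ℝ)^j := by positivity
      have hq := epsF_pos (nt (2*l+1))
      linarith
  -- main estimate
  refine ⟨n, hnmono, ?_⟩
  intro a N
  simp only
  set n₂ : ℕ → ℕ := fun l => n (2*l) with hn₂def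
  set nt₂ : ℕ → ℕ := fun l => nt (2*l) with hnt₂def
  have hn₂mono : StrictMono n₂ := fun p q h => hnmono (by omega)
  have hnt₂mono : StrictMono nt₂ := fun p q h => hntmono (by omega)
  have hle₂ : ∀ i, nt₂ i ≤ n₂ i := fun i => hn2 (2*i)
  set M₀ : ℕ := n₂ N + 1 with hM₀
  have hM : ∀ l < N, n₂ l < M₀ := by
    intro l hl
    have := hn₂mono.monotone (le_of_lt hl)
    omega
  set ac : ℕ → ℝ := extSeq n₂ N a with hac
  have hsum : ∑ i ∈ Finset.range M₀, ac i • w i = ∑ l ∈ Finset.range N, a l • w (n₂ l) :=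
    extSeq_sum n₂ N a w hM
  set LHS : ℝ := ‖∑ l ∈ Finset.range N, a l • w (n₂ l)‖ with hLHS
  set RHS : ℝ := ‖∑ l ∈ Finset.range N, a l • f (branchSet n l)‖ with hRHS
  have hlub := hw ac M₀
  rw [hsum] at hlub
  have hLHS0 : 0 ≤ LHS := norm_nonneg _
  have hRHS0 : 0 ≤ RHS := norm_nonneg _
  -- coordinate bound for a
  have habs : ∀ l, l < N → |a l| ≤ LHS := by
    intro l hl
    have hmem : ∀ σ : ℝ, |σ| = 1 → σ * a l ∈ {r : ℝ | ∃ b : ℕ → ℝ,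
        ‖∑ i ∈ Finset.range M₀, b i • v i‖ ≤ 1 ∧
        r = ∑ i ∈ Finset.range M₀, ac i * b i} := by
      intro σ hσ
      refine ⟨fun i => if i = n₂ l then σ else 0, ?_, ?_⟩
      · have : ∑ i ∈ Finset.range M₀, (if i = n₂ l then σ else 0) • v i = σ • v (n₂ l) := by
          rw [Finset.sum_eq_single (n₂ l)]
          · rw [if_pos rfl]
          · intro i _ hne; rw [if_neg hne, zero_smul]
          · intro hh; exact absurd (Finset.mem_range.2 (hM l hl)) hh
        rw [this, norm_smul, Real.norm_eq_abs, hσ, hvnorm, mul_one]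
      · rw [Finset.sum_eq_single (n₂ l)]
        · simp [hac, extSeq_apply n₂ hn₂mono N a hl, mul_comm]
        · intro i _ hne; simp [hne]
        · intro hh; exact absurd (Finset.mem_range.2 (hM l hl)) hh
    have h1' := hlub.1 (hmem 1 (by norm_num))
    have h2' := hlub.1 (hmem (-1) (by norm_num))
    rw [one_mul] at h1'
    rw [neg_one_mul] at h2'
    rw [abs_le]
    constructor <;> linarith
  -- upper bound each member of the LUB set
  have hub : ∀ r ∈ {r : ℝ | ∃ b : ℕ → ℝ,
      ‖∑ i ∈ Finset.range M₀, b i • v i‖ ≤ 1 ∧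
      r = ∑ i ∈ Finset.range M₀, ac i * b i}, r ≤ 4*CX*D*RHS + LHS/2 := by
    rintro r ⟨b, hb1, rfl⟩
    have hr : ∑ i ∈ Finset.range M₀, ac i * b i = ∑ l ∈ Finset.range N, a l * b (n₂ l) := by
      have := extSeq_sum (V := ℝ) n₂ N a b hM
      simpa [smul_eq_mul, hac] using this
    set β : ℕ → ℝ := fun l => b (n₂ l) with hβ
    have hβnorm : ‖∑ l ∈ Finset.range N, β l • v (n₂ l)‖ ≤ 1 :=
      le_trans (proj_sub hvuncond hn₂mono b N M₀ hM) hb1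
    have hβ1 : ∀ l, l < N → |β l| ≤ 1 := fun l hl =>
      le_trans (coord_bound hvuncond hvnorm hn₂mono β N hl) hβnorm
    have hFD : ∀ j, 1/2 ≤ Fl j (Dl j) := fun j => (hnodes j).2.2.2.1
    have hFDne : ∀ j, Fl j (Dl j) ≠ 0 := fun j => by have := hFD j; intro h0; rw [h0] at this; linarith
    set c : ℕ → ℝ := fun j => β j / (Fl j (Dl j)) with hc
    have hcβ : ∀ j, |c j| ≤ 2 * |β j| := by
      intro j
      rw [hc]
      simp only
      rw [abs_div, div_le_iff₀ (abs_pos.2 (hFDne j))]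
      have hF : |Fl j (Dl j)| = Fl j (Dl j) := abs_of_pos (by have := hFD j; linarith)
      rw [hF]
      nlinarith [abs_nonneg (β j), hFD j]
    set z : X := ∑ j ∈ Finset.range N, c j • Dl j with hz
    have hznorm : ‖z‖ ≤ 4*CX*D := by
      have hz2 : z = ∑ j ∈ Finset.range N, (c j * ‖Dl j‖) • y (branchSet nt j) := by
        rw [hz]
        refine Finset.sum_congr rfl ?_
        intro j _
        conv_lhs => rw [hDlY j]
        rw [smul_smul, hbranchy j]
      have hdom := hntdom (fun j => c j * ‖Dl j‖) N
      simp only at hdom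
      have hlat : ‖∑ j ∈ Finset.range N, (c j * ‖Dl j‖) • v (nt₂ j)‖
          ≤ ‖∑ j ∈ Finset.range N, (4 * β j) • v (nt₂ j)‖ := by
        refine lattice_sub hvuncond hnt₂mono N ?_
        intro j
        have h4 : |c j * ‖Dl j‖| ≤ |4 * β j| := by
          rw [abs_mul, abs_mul]
          have hDlj : |(‖Dl j‖ : ℝ)| ≤ 2 := by
            rw [abs_of_nonneg (norm_nonneg _)]
            exact (hnodes j).2.1
          have := hcβ j
          have hb0 : (0:ℝ) ≤ |β j| := abs_nonneg _
          have hc0 : (0:ℝ) ≤ |c j| := abs_nonneg _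
          rw [show |(4:ℝ)| = 4 by norm_num]
          nlinarith
        exact h4
      have hpull : ∑ j ∈ Finset.range N, (4 * β j) • v (nt₂ j)
          = (4:ℝ) • ∑ j ∈ Finset.range N, β j • v (nt₂ j) := by
        rw [Finset.smul_sum]
        refine Finset.sum_congr rfl ?_
        intro j _
        rw [smul_smul]
      have hrd := hD nt₂ n₂ hnt₂mono hn₂mono hle₂ β N
      simp only at hrd
      calc ‖z‖ = ‖∑ j ∈ Finset.range N, (c j * ‖Dl j‖) • y (branchSet nt j)‖ := by rw [← hz2]
        _ ≤ CX * ‖∑ j ∈ Finset.range N, (c j * ‖Dl j‖) • v (nt (2*j))‖ := hdom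
        _ = CX * ‖∑ j ∈ Finset.range N, (c j * ‖Dl j‖) • v (nt₂ j)‖ := rfl
        _ ≤ CX * ‖∑ j ∈ Finset.range N, (4 * β j) • v (nt₂ j)‖ := by
            apply mul_le_mul_of_nonneg_left hlat (by linarith)
        _ = CX * (4 * ‖∑ j ∈ Finset.range N, β j • v (nt₂ j)‖) := by
            rw [hpull, norm_smul, Real.norm_eq_abs]
            norm_num
        _ ≤ CX * (4 * (D * ‖∑ j ∈ Finset.range N, β j • v (n₂ j)‖)) := by
            have hCX0 : (0:ℝ) ≤ CX := by linarith
            gcongr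
        _ ≤ CX * (4 * (D * 1)) := by
            have hCX0 : (0:ℝ) ≤ CX := by linarith
            have hD0 : (0:ℝ) ≤ D := by linarith
            gcongr
        _ = 4*CX*D := by ring
    -- pairing computation
    have hΦz : (∑ l ∈ Finset.range N, a l • f (branchSet n l)) z
        = ∑ l ∈ Finset.range N, a l * ((Fl l) z) := by
      rw [ContinuousLinearMap.sum_apply]
      refine Finset.sum_congr rfl ?_
      intro l _
      rw [ContinuousLinearMap.smul_apply, smul_eq_mul, hbranchf l]
    have hFlz : ∀ l, (Fl l) z = ∑ j ∈ Finset.range N, c j * (Fl l (Dl j)) := by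
      intro l
      rw [hz, map_sum]
      refine Finset.sum_congr rfl ?_
      intro j _
      rw [map_smul, smul_eq_mul]
    have hdiag : ∀ l, c l * Fl l (Dl l) = β l := fun l => div_mul_cancel₀ _ (hFDne l)
    set E : ℝ := ∑ l ∈ Finset.range N, a l *
      (∑ j ∈ (Finset.range N).erase l, c j * (Fl l (Dl j))) with hE
    have hre : (∑ l ∈ Finset.range N, a l • f (branchSet n l)) z
        = (∑ l ∈ Finset.range N, a l * β l) + E := by
      rw [hΦz, hE, ← Finset.sum_add_distrib]
      refine Finset.sum_congr rfl ?_
      intro l hl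
      rw [hFlz l, ← Finset.add_sum_erase _ _ hl, hdiag l, mul_add]
    -- bound the error term
    have hEb : |E| ≤ LHS / 2 := by
      have hterm : ∀ l ∈ Finset.range N,
          |a l * (∑ j ∈ (Finset.range N).erase l, c j * (Fl l (Dl j)))|
          ≤ LHS * ((2/25) * (1/2:ℝ)^l) := by
        intro l hl
        rw [abs_mul]
        have hinner : |∑ j ∈ (Finset.range N).erase l, c j * (Fl l (Dl j))|
            ≤ (2/25) * (1/2:ℝ)^l := by
          calc |∑ j ∈ (Finset.range N).erase l, c j * (Fl l (Dl j))|
              ≤ ∑ j ∈ (Finset.range N).erase l, |c j * (Fl l (Dl j))| :=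
                Finset.abs_sum_le_sum_abs _ _
            _ ≤ ∑ j ∈ (Finset.range N).erase l, (2/25) * (1/2:ℝ)^l * ((1/2:ℝ)^j / 2) := by
                refine Finset.sum_le_sum ?_
                intro j hj
                have hjN : j < N := Finset.mem_range.1 (Finset.mem_of_mem_erase hj)
                have hjl : j ≠ l := Finset.ne_of_mem_erase hj
                rw [abs_mul]
                have hc2 : |c j| ≤ 2 := by
                  have := hcβ j
                  have := hβ1 j hjN
                  linarith
                have hcr := hcross l j (Ne.symm hjl)
                have h0c : (0:ℝ) ≤ |c j| := abs_nonneg _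
                have h0F : (0:ℝ) ≤ |Fl l (Dl j)| := abs_nonneg _
                have hFb : |Fl l (Dl j)| ≤ (1/50) * ((1/2:ℝ)^l * (1/2:ℝ)^j) := hcr
                nlinarith [pow_nonneg (by norm_num : (0:ℝ) ≤ 1/2) l,
                  pow_nonneg (by norm_num : (0:ℝ) ≤ 1/2) j]
            _ ≤ ∑ j ∈ Finset.range N, (2/25) * (1/2:ℝ)^l * ((1/2:ℝ)^j / 2) := by
                refine Finset.sum_le_sum_of_subset_of_nonneg (Finset.erase_subset _ _) ?_
                intro j _ _
                positivity
            _ = (2/25) * (1/2:ℝ)^l * ((∑ j ∈ Finset.range N, (1/2:ℝ)^j) / 2) := by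
                rw [Finset.sum_div, Finset.mul_sum]
            _ ≤ (2/25) * (1/2:ℝ)^l * 1 := by
                have := sum_halves N
                have h0 : (0:ℝ) ≤ (2/25) * (1/2:ℝ)^l := by positivity
                nlinarith
            _ = (2/25) * (1/2:ℝ)^l := mul_one _
        have hal : |a l| ≤ LHS := habs l (Finset.mem_range.1 hl)
        calc |a l| * |∑ j ∈ (Finset.range N).erase l, c j * (Fl l (Dl j))|
            ≤ LHS * ((2/25) * (1/2:ℝ)^l) := by
              apply mul_le_mul hal hinner (abs_nonneg _) hLHS0
          _ = LHS * ((2/25) * (1/2:ℝ)^l) := rfl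
      calc |E| ≤ ∑ l ∈ Finset.range N, |a l *
            (∑ j ∈ (Finset.range N).erase l, c j * (Fl l (Dl j)))| := by
            rw [hE]; exact Finset.abs_sum_le_sum_abs _ _
        _ ≤ ∑ l ∈ Finset.range N, LHS * ((2/25) * (1/2:ℝ)^l) := Finset.sum_le_sum hterm
        _ = LHS * (2/25) * (∑ l ∈ Finset.range N, (1/2:ℝ)^l) := by
            rw [Finset.mul_sum]
            refine Finset.sum_congr rfl ?_
            intro l _
            ring
        _ ≤ LHS * (2/25) * 2 := by
            have := sum_halves N
            have h0 : (0:ℝ) ≤ LHS * (2/25) := by positivity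
            nlinarith
        _ ≤ LHS / 2 := by linarith
    -- final member bound
    have hΦnorm : |(∑ l ∈ Finset.range N, a l • f (branchSet n l)) z| ≤ RHS * (4*CX*D) := by
      have := (∑ l ∈ Finset.range N, a l • f (branchSet n l)).le_opNorm z
      rw [Real.norm_eq_abs] at this
      calc |(∑ l ∈ Finset.range N, a l • f (branchSet n l)) z|
          ≤ ‖(∑ l ∈ Finset.range N, a l • f (branchSet n l) : X →L[ℝ] ℝ)‖ * ‖z‖ := this
        _ ≤ RHS * (4*CX*D) := by
            rw [hRHS]
            apply mul_le_mul_of_nonneg_left hznorm (norm_nonneg _)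
    have hfin : ∑ l ∈ Finset.range N, a l * β l ≤ 4*CX*D*RHS + LHS/2 := by
      have h6 : ∑ l ∈ Finset.range N, a l * β l
          = (∑ l ∈ Finset.range N, a l • f (branchSet n l)) z - E := by
        rw [hre]; ring
      rw [h6]
      have h7 := abs_le.1 hΦnorm
      have h8 := abs_le.1 hEb
      have h9 : RHS * (4*CX*D) = 4*CX*D*RHS := by ring
      calc (∑ l ∈ Finset.range N, a l • f (branchSet n l)) z - E
          ≤ RHS * (4*CX*D) + LHS/2 := by linarith [h7.2, h8.1]
        _ = 4*CX*D*RHS + LHS/2 := by rw [h9]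
    rw [hr]
    rw [hβ] at hfin
    exact hfin
  have hupper : LHS ≤ 4*CX*D*RHS + LHS/2 := hlub.2 hub
  have : LHS/2 ≤ 4*CX*D*RHS := by linarith
  linarith
end
end

section
/- Let X and Z be Banach spaces, let F = (F_i) be a bimonotone FDD of Z, and let Q : Z -> X be a quotient map (bounded linear surjection). Suppose (x_i) is a weakly null sequence in the unit sphere S_X and Q(C B_Z) contains B_X for some C > 0, where B_Z, B_X are the closed unit balls. Then for every epsilon > 0 and every n in N there exist N in N and z in 2C B_Z such that P^F_{[1,n]} z = 0 and ||Qz - x_N|| < epsilon. -/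
open Filter Topology Set

noncomputable section

section Helpers

variable {Z : Type*} [NormedAddCommGroup Z] [NormedSpace ℝ Z]

lemma FDD.proj_apply_s10 (F : FDD Z) (s : Finset ℕ) (z : Z) :
    F.proj s z = ∑ i ∈ s, F.P i z := by
  simp [FDD.proj, ContinuousLinearMap.sum_apply]

lemma FDD.P_P_s10 (F : FDD Z) (i j : ℕ) (z : Z) :
    F.P i (F.P j z) = if i = j then F.P j z else 0 := by
  have h := F.unique (F.P j z) (fun i => if i = j then F.P j z else 0)
    (fun i => by by_cases h : i = j <;> simp [h, F.mem_E])
    (by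
      apply tendsto_atTop_of_eventually_const (i₀ := j + 1)
      intro m hm
      rw [Finset.sum_ite_eq' (Finset.range m) j]
      simp [Nat.lt_of_succ_le hm])
  exact (h i).symm

lemma FDD.proj_proj_s10 (F : FDD Z) (s : Finset ℕ) (z : Z) :
    F.proj s (F.proj s z) = F.proj s z := by
  rw [F.proj_apply_s10 s z, F.proj_apply_s10 s]
  rw [Finset.sum_congr rfl (fun j hj => map_sum (F.P j) _ s)]
  calc ∑ j ∈ s, ∑ i ∈ s, F.P j (F.P i z)
      = ∑ j ∈ s, F.P j z := by
        refine Finset.sum_congr rfl (fun j hj => ?_)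
        rw [Finset.sum_congr rfl (fun i _ => F.P_P_s10 j i z)]
        simp [Finset.sum_ite_eq, hj]
    _ = _ := rfl

lemma FDD.norm_proj_Ico_le (F : FDD Z) (hbm : F.Bimonotone) (a b : ℕ) (z : Z) :
    ‖F.proj (Finset.Ico a b) z‖ ≤ ‖z‖ := by
  rcases le_or_gt b a with h | h
  · rw [Finset.Ico_eq_empty (by omega)]
    simp [F.proj_apply_s10]
  · have : Finset.Ico a b = Finset.Icc a (b - 1) := by
      rw [← Finset.Ico_add_one_right_eq_Icc]
      congr 1
      omega
    rw [this]
    exact hbm a (b - 1) z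

lemma FDD.norm_proj_range_le (F : FDD Z) (hbm : F.Bimonotone) (n : ℕ) (z : Z) :
    ‖F.proj (Finset.range n) z‖ ≤ ‖z‖ := by
  rw [Finset.range_eq_Ico]
  exact F.norm_proj_Ico_le hbm 0 n z

lemma FDD.norm_sub_proj_range_le (F : FDD Z) (hbm : F.Bimonotone) (n : ℕ) (z : Z) :
    ‖z - F.proj (Finset.range n) z‖ ≤ ‖z‖ := by
  have htt : Filter.Tendsto (fun m => ∑ i ∈ Finset.range m, F.P i z - F.proj (Finset.range n) z)
      Filter.atTop (nhds (z - F.proj (Finset.range n) z)) :=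
    (F.sum_eq z).sub_const _
  refine le_of_tendsto htt.norm ?_
  filter_upwards [Filter.eventually_ge_atTop n] with m hm
  have : ∑ i ∈ Finset.range m, F.P i z - F.proj (Finset.range n) z
      = F.proj (Finset.Ico n m) z := by
    rw [F.proj_apply_s10, F.proj_apply_s10, Finset.range_eq_Ico,
      ← Finset.sum_Ico_consecutive _ (Nat.zero_le n) hm]
    rw [← Finset.range_eq_Ico]
    abel
  rw [this]
  exact F.norm_proj_Ico_le hbm n m z

/-- Mazur: a weakly null sequence admits small convex combinations. -/
lemma mazur_small_combo {X : Type*} [NormedAddCommGroup X] [NormedSpace ℝ X]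
    (u : ℕ → X) (hu : ∀ φ : X →L[ℝ] ℝ, Tendsto (fun i => φ (u i)) atTop (𝓝 0))
    (δ : ℝ) (hδ : 0 < δ) :
    ∃ (ι : Type) (t : Finset ι) (lam : ι → ℝ) (g : ι → ℕ),
      (∀ i ∈ t, 0 ≤ lam i) ∧ ∑ i ∈ t, lam i = 1 ∧
      ‖∑ i ∈ t, lam i • u (g i)‖ < δ := by
  set S : Set X := Set.range u with hS
  have h0 : (0 : X) ∈ closure (convexHull ℝ S) := by
    by_contra h0
    obtain ⟨f, c, hfc, hc⟩ := geometric_hahn_banach_point_closed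
      ((convex_convexHull ℝ S).closure) isClosed_closure h0
    rw [map_zero] at hfc
    obtain ⟨i, hi⟩ := ((hu f).eventually_lt_const hfc).exists
    exact absurd (hc (u i)
      (subset_closure (subset_convexHull ℝ S (Set.mem_range_self i)))) (not_lt.2 hi.le)
  rw [Metric.mem_closure_iff] at h0
  obtain ⟨y, hy, hdist⟩ := h0 δ hδ
  rw [dist_zero_left] at hdist
  rw [convexHull_eq] at hy
  obtain ⟨ι, t, wfn, zfn, hw0, hw1, hz, hcm⟩ := hy
  classical
  refine ⟨ι, t, wfn, fun i => if h : ∃ k, u k = zfn i then Classical.choose h else 0,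
    hw0, hw1, ?_⟩
  have : ∑ i ∈ t, wfn i • u (if h : ∃ k, u k = zfn i then Classical.choose h else 0)
      = ∑ i ∈ t, wfn i • zfn i := by
    refine Finset.sum_congr rfl (fun i hi => ?_)
    obtain ⟨k, hk⟩ := hz i hi
    rw [dif_pos ⟨k, hk⟩, Classical.choose_spec (⟨k, hk⟩ : ∃ k, u k = zfn i)]
  rw [this, ← Finset.centerMass_eq_of_sum_1 _ _ hw1, hcm]
  exact hdist

end Helpers

set_option maxHeartbeats 1000000 in
/-- Lemma 3.3: lifting a weakly null sequence through a quotient map, up to `ε` and with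
a lift vanishing on the first coordinates of the FDD (here the first `n` coordinates,
i.e. the paper's `P_{[1,n]}` is the projection onto `Finset.range n`). -/
theorem quotient_lift_weakly_null
    {X : Type*} [NormedAddCommGroup X] [NormedSpace ℝ X] [CompleteSpace X]
    {Z : Type*} [NormedAddCommGroup Z] [NormedSpace ℝ Z] [CompleteSpace Z]
    (F : FDD Z) (hbm : F.Bimonotone)
    (Q : Z →L[ℝ] X) (hQ : Function.Surjective Q)
    (C : ℝ) (hC : 0 < C)
    (hball : ∀ x : X, ‖x‖ ≤ 1 → ∃ z : Z, ‖z‖ ≤ C ∧ Q z = x)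
    (x : ℕ → X) (hx1 : ∀ i, ‖x i‖ = 1) (hxw : WeaklyNullSeq x) :
    ∀ ε : ℝ, 0 < ε → ∀ n : ℕ, ∃ (N : ℕ) (z : Z),
      ‖z‖ ≤ 2*C ∧ F.proj (Finset.range n) z = 0 ∧ ‖Q z - x N‖ < ε := by
  intro ε hε n
  classical
  set δ := ε / (2 * (1 + ‖Q‖)) with hδdef
  have hQ1 : (0:ℝ) < 1 + ‖Q‖ := by positivity
  have hδ : 0 < δ := by positivity
  -- the lifts
  have hlift : ∀ i, ∃ z : Z, ‖z‖ ≤ C ∧ Q z = x i := fun i => hball (x i) (le_of_eq (hx1 i))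
  choose zf hzfC hzfQ using hlift
  -- the finite-dimensional range of the projection
  haveI : ∀ i, FiniteDimensional ℝ (F.E i) := F.finDim
  set M : Submodule ℝ Z := (Finset.range n).sup F.E with hM
  haveI : FiniteDimensional ℝ M := Submodule.finiteDimensional_finset_sup _ _
  have hmemM : ∀ z : Z, F.proj (Finset.range n) z ∈ M := by
    intro z
    rw [F.proj_apply_s10]
    exact Submodule.sum_mem _ fun i hi => (Finset.le_sup hi : F.E i ≤ M) (F.mem_E i z)
  -- extract a convergent subsequence of the projections
  set yseq : ℕ → M := fun i => ⟨F.proj (Finset.range n) (zf i), hmemM _⟩ with hyseq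
  have hybd : ∀ i, yseq i ∈ Metric.closedBall (0 : M) C := by
    intro i
    rw [Metric.mem_closedBall, dist_zero_right]
    exact le_trans (F.norm_proj_range_le hbm n (zf i)) (hzfC i)
  obtain ⟨w₀, -, φ, hφ, hconv⟩ :=
    tendsto_subseq_of_bounded Metric.isBounded_closedBall hybd
  have hconvZ : Tendsto (fun k => F.proj (Finset.range n) (zf (φ k))) atTop (𝓝 (w₀ : Z)) :=
    ((continuous_subtype_val).continuousAt.tendsto.comp hconv)
  obtain ⟨K, hK⟩ := (Metric.tendsto_atTop.mp hconvZ) δ hδ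
  have hKd : ∀ k, K ≤ k → ‖F.proj (Finset.range n) (zf (φ k)) - (w₀ : Z)‖ < δ := by
    intro k hk
    have := hK k hk
    rwa [dist_eq_norm] at this
  -- Mazur for the weakly null subsequence of the tail
  have hwn : ∀ ψ : X →L[ℝ] ℝ, Tendsto (fun k => ψ (x (φ (k + K)))) atTop (𝓝 0) := by
    intro ψ
    exact (hxw ψ).comp (hφ.tendsto_atTop.comp (tendsto_add_atTop_nat K))
  obtain ⟨ι, t, lam, g, hlam0, hlam1, hcombo⟩ :=
    mazur_small_combo (fun k => x (φ (k + K))) hwn δ hδ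
  -- the candidate
  set N := φ K with hN
  set u0 : Z := zf N - ∑ i ∈ t, lam i • zf (φ (g i + K)) with hu0
  set z : Z := u0 - F.proj (Finset.range n) u0 with hzdef
  refine ⟨N, z, ?_, ?_, ?_⟩
  · -- norm bound
    have h1 : ‖u0‖ ≤ 2 * C := by
      have h2 : ‖∑ i ∈ t, lam i • zf (φ (g i + K))‖ ≤ C := by
        calc ‖∑ i ∈ t, lam i • zf (φ (g i + K))‖
            ≤ ∑ i ∈ t, ‖lam i • zf (φ (g i + K))‖ := norm_sum_le _ _
          _ ≤ ∑ i ∈ t, lam i * C := by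
              refine Finset.sum_le_sum (fun i hi => ?_)
              rw [norm_smul, Real.norm_eq_abs, abs_of_nonneg (hlam0 i hi)]
              exact mul_le_mul_of_nonneg_left (hzfC _) (hlam0 i hi)
          _ = C := by rw [← Finset.sum_mul, hlam1, one_mul]
      calc ‖u0‖ ≤ ‖zf N‖ + ‖∑ i ∈ t, lam i • zf (φ (g i + K))‖ := norm_sub_le _ _
        _ ≤ C + C := add_le_add (hzfC N) h2
        _ = 2 * C := by ring
    exact le_trans (F.norm_sub_proj_range_le hbm n u0) h1
  · -- vanishing projection
    rw [hzdef, map_sub, F.proj_proj_s10, sub_self]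
  · -- approximation
    have hPu0 : ‖F.proj (Finset.range n) u0‖ ≤ 2 * δ := by
      have hexp : F.proj (Finset.range n) u0
          = (F.proj (Finset.range n) (zf N) - (w₀ : Z))
            - ∑ i ∈ t, lam i • (F.proj (Finset.range n) (zf (φ (g i + K))) - (w₀ : Z)) := by
        have hsum : ∑ i ∈ t, lam i • (F.proj (Finset.range n) (zf (φ (g i + K))) - (w₀ : Z))
            = (∑ i ∈ t, lam i • F.proj (Finset.range n) (zf (φ (g i + K)))) - (w₀ : Z) := by
          rw [Finset.sum_congr rfl (fun i _ => smul_sub (lam i) _ ((w₀ : Z))), Finset.sum_sub_distrib]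
          congr 1
          rw [← Finset.sum_smul, hlam1, one_smul]
        rw [hsum, hu0, map_sub]
        rw [map_sum]
        simp only [map_smul]
        abel
      rw [hexp]
      have hterm : ‖∑ i ∈ t, lam i • (F.proj (Finset.range n) (zf (φ (g i + K))) - (w₀ : Z))‖
          ≤ δ := by
        calc ‖∑ i ∈ t, lam i • (F.proj (Finset.range n) (zf (φ (g i + K))) - (w₀ : Z))‖
            ≤ ∑ i ∈ t, ‖lam i • (F.proj (Finset.range n) (zf (φ (g i + K))) - (w₀ : Z))‖ :=
              norm_sum_le _ _
          _ ≤ ∑ i ∈ t, lam i * δ := by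
              refine Finset.sum_le_sum (fun i hi => ?_)
              rw [norm_smul, Real.norm_eq_abs, abs_of_nonneg (hlam0 i hi)]
              exact mul_le_mul_of_nonneg_left (hKd _ (Nat.le_add_left K (g i))).le (hlam0 i hi)
          _ = δ := by rw [← Finset.sum_mul, hlam1, one_mul]
      calc ‖_ - _‖ ≤ ‖F.proj (Finset.range n) (zf N) - (w₀ : Z)‖
            + ‖∑ i ∈ t, lam i • (F.proj (Finset.range n) (zf (φ (g i + K))) - (w₀ : Z))‖ :=
            norm_sub_le _ _
        _ ≤ δ + δ := add_le_add (hKd K le_rfl).le hterm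
        _ = 2 * δ := by ring
    have hQz : Q z - x N
        = -(∑ i ∈ t, lam i • x (φ (g i + K))) - Q (F.proj (Finset.range n) u0) := by
      rw [hzdef, map_sub, hu0, map_sub, map_sum]
      simp only [map_smul, hzfQ]
      abel
    calc ‖Q z - x N‖
        ≤ ‖∑ i ∈ t, lam i • x (φ (g i + K))‖ + ‖Q (F.proj (Finset.range n) u0)‖ := by
          rw [hQz]
          exact le_trans (norm_sub_le _ _) (by rw [norm_neg])
      _ ≤ δ + ‖Q‖ * (2 * δ) := by
          refine add_le_add hcombo.le ?_
          exact le_trans (Q.le_opNorm _) (mul_le_mul_of_nonneg_left hPu0 (norm_nonneg Q))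
      _ < 2 * (1 + ‖Q‖) * δ := by nlinarith [norm_nonneg Q]
      _ = ε := by
          rw [hδdef]
          field_simp
end
end
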